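/- arXiv:2105.12004 — 6 statements merged into one kernel-verified Lean document; each statement's English description precedes it below -/
import Mathlib

section
/- A subset Θ ⊆ ℝ has countable closure if and only if for every interval I ⊆ ℝ and every function f : I → ℝ, if f is continuous on I and the restriction of f to I \ Θ is Lipschitz continuous with respect to the intrinsic metric on I \ Θ, then f is Lipschitz continuous on I. -/
open Set MeasureTheory ENNReal Topology Filter

section Defs

variable {M : Type*} [MetricSpace M]

/-- `γ` is a path in `E` from `x` to `y` parametrized on `[a,b]`. -/
def IsPathIn (E : Set M) (γ : ℝ → M) (a b : ℝ) (x y : M) : Prop :=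
  a ≤ b ∧ ContinuousOn γ (Set.Icc a b) ∧ γ a = x ∧ γ b = y ∧ ∀ t ∈ Set.Icc a b, γ t ∈ E

/-- Length of a path: total variation over `[a,b]`. -/
noncomputable def pathLength (γ : ℝ → M) (a b : ℝ) : ℝ≥0∞ := eVariationOn γ (Set.Icc a b)

/-- Intrinsic metric on `E`: infimum of lengths of finite-length paths in `E`. -/
noncomputable def intrinsicDist (E : Set M) (x y : M) : ℝ≥0∞ :=
  sInf { L | ∃ γ a b, IsPathIn E γ a b x y ∧ pathLength γ a b < ⊤ ∧ pathLength γ a b = L }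

/-- `Θ`-intrinsic metric relative to ambient set `N`: only paths whose intersection with `Θ`
has countable closure (closure taken in the subspace `N`) are allowed. -/
noncomputable def thetaDistIn (N Θ : Set M) (x y : M) : ℝ≥0∞ :=
  sInf { L | ∃ γ a b, IsPathIn N γ a b x y ∧ pathLength γ a b < ⊤ ∧
    (closure (γ '' Set.Icc a b ∩ Θ) ∩ N).Countable ∧ pathLength γ a b = L }

/-- `Θ`-finite intrinsic metric relative to ambient set `N`: only paths meeting `Θ` in finitely
many points are allowed. -/
noncomputable def thetaFinDistIn (N Θ : Set M) (x y : M) : ℝ≥0∞ :=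
  sInf { L | ∃ γ a b, IsPathIn N γ a b x y ∧ pathLength γ a b < ⊤ ∧
    (γ '' Set.Icc a b ∩ Θ).Finite ∧ pathLength γ a b = L }

/-- `Θ` is permeable relative to `N`. -/
def PermeableIn (N Θ : Set M) : Prop :=
  ∀ x ∈ N, ∀ y ∈ N, thetaDistIn N Θ x y = intrinsicDist N x y

/-- `Θ` is finitely permeable relative to `N`. -/
def FinitelyPermeableIn (N Θ : Set M) : Prop :=
  ∀ x ∈ N, ∀ y ∈ N, thetaFinDistIn N Θ x y = intrinsicDist N x y

/-- `Θ` is permeable (relative to the whole space). -/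
def Permeable (Θ : Set M) : Prop := PermeableIn Set.univ Θ

/-- `Θ` is finitely permeable (relative to the whole space). -/
def FinitelyPermeable (Θ : Set M) : Prop := FinitelyPermeableIn Set.univ Θ

end Defs

lemma intrinsicDist_Icc_le {E : Set ℝ} {p q : ℝ} (hpq : p ≤ q) (h : Set.Icc p q ⊆ E) :
    intrinsicDist E p q ≤ ENNReal.ofReal (q - p) := by
  have hmono : MonotoneOn (id : ℝ → ℝ) (Set.Icc p q) := fun a _ b _ hab => hab
  have hvar : eVariationOn (id : ℝ → ℝ) (Set.Icc p q) ≤ ENNReal.ofReal (q - p) := by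
    have := hmono.eVariationOn_le (Set.left_mem_Icc.2 hpq) (Set.right_mem_Icc.2 hpq)
    simpa [Set.inter_self] using this
  have hmem : pathLength (id : ℝ → ℝ) p q ∈
      { L | ∃ γ a b, IsPathIn E γ a b p q ∧ pathLength γ a b < ⊤ ∧ pathLength γ a b = L } :=
    ⟨id, p, q, ⟨hpq, continuousOn_id, rfl, rfl, fun t ht => h ht⟩,
      lt_of_le_of_lt hvar ENNReal.ofReal_lt_top, rfl⟩
  exact le_trans (sInf_le hmem) hvar

lemma fwd_one_sided (Θ I : Set ℝ) (hΘ : (closure Θ).Countable) (hI : I.OrdConnected)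
    (f : ℝ → ℝ) (hf : ContinuousOn f I) (L : NNReal)
    (hL : ∀ x ∈ I \ Θ, ∀ y ∈ I \ Θ, intrinsicDist (I \ Θ) x y < ⊤ →
          edist (f x) (f y) ≤ L * intrinsicDist (I \ Θ) x y) :
    ∀ x ∈ I, ∀ y ∈ I, x ≤ y → f y - f x ≤ L * (y - x) := by
  have hseg : ∀ p q : ℝ, p ≤ q → Set.Icc p q ⊆ I \ Θ → |f q - f p| ≤ L * (q - p) := by
    intro p q hpq hsub
    have hd := intrinsicDist_Icc_le hpq hsub
    have hfin : intrinsicDist (I \ Θ) p q < ⊤ := lt_of_le_of_lt hd ENNReal.ofReal_lt_top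
    have hp : p ∈ I \ Θ := hsub ⟨le_refl p, hpq⟩
    have hq : q ∈ I \ Θ := hsub ⟨hpq, le_refl q⟩
    have h1 := hL p hp q hq hfin
    have h2 : edist (f p) (f q) ≤ ENNReal.ofReal ((L : ℝ) * (q - p)) := by
      calc edist (f p) (f q) ≤ (L : ℝ≥0∞) * intrinsicDist (I \ Θ) p q := h1
        _ ≤ (L : ℝ≥0∞) * ENNReal.ofReal (q - p) := by
            exact mul_le_mul_right hd _
        _ = ENNReal.ofReal ((L : ℝ) * (q - p)) := by
            rw [ENNReal.ofReal_mul L.coe_nonneg, ENNReal.ofReal_coe_nnreal]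
    rw [edist_dist] at h2
    have h3 : dist (f p) (f q) ≤ (L : ℝ) * (q - p) :=
      (ENNReal.ofReal_le_ofReal_iff (mul_nonneg L.coe_nonneg (by linarith))).1 h2
    rw [Real.dist_eq, abs_sub_comm] at h3
    exact h3
  intro x hx y hy hxy
  by_contra hcon
  push_neg at hcon
  have hxy' : x < y := by
    rcases lt_or_eq_of_le hxy with h | h
    · exact h
    · exfalso; rw [h] at hcon; simp at hcon
  set C := closure Θ with hC
  have hIcc : Set.Icc x y ⊆ I := hI.out hx hy
  have hfc : ContinuousOn f (Set.Icc x y) := hf.mono hIcc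
  set g : ℝ → ℝ := fun t => (L : ℝ) * (t - x) - (f t - f x) with hgdef
  have hg : ContinuousOn g (Set.Icc x y) :=
    (continuousOn_const.mul (continuousOn_id.sub continuousOn_const)).sub
      (hfc.sub continuousOn_const)
  have hgx : g x = 0 := by simp [hgdef]
  have hgy : g y < 0 := by simp only [hgdef]; linarith
  have himg : (g '' (C ∩ Set.Icc x y)).Countable :=
    (hΘ.mono Set.inter_subset_left).image g
  have hvex : ∃ v, v ∈ Set.Ioo (g y) 0 ∧ v ∉ g '' (C ∩ Set.Icc x y) := by
    by_contra hv
    push_neg at hv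
    have hsub : Set.Ioo (g y) 0 ⊆ g '' (C ∩ Set.Icc x y) := fun v hvI => hv v hvI
    have hcnt : (Set.Ioo (g y) (0 : ℝ)).Countable := himg.mono hsub
    have hmk := Cardinal.mk_Ioo_real hgy
    rw [← Cardinal.le_aleph0_iff_set_countable] at hcnt
    rw [hmk] at hcnt
    exact absurd hcnt (not_le.2 Cardinal.aleph0_lt_continuum)
  obtain ⟨v, hvI, hvim⟩ := hvex
  set A := Set.Icc x y ∩ g ⁻¹' (Set.Ici v) with hA
  have hAx : x ∈ A := ⟨Set.left_mem_Icc.2 hxy, by simp [Set.mem_preimage, hgx]; exact hvI.2.le⟩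
  have hAclosed : IsClosed A := hg.preimage_isClosed_of_isClosed isClosed_Icc isClosed_Ici
  have hAbdd : BddAbove A := ⟨y, fun t ht => ht.1.2⟩
  set t₀ := sSup A with ht₀def
  have ht₀A : t₀ ∈ A := hAclosed.csSup_mem ⟨x, hAx⟩ hAbdd
  have ht₀ : t₀ ∈ Set.Icc x y := ht₀A.1
  have hvt₀ : v ≤ g t₀ := ht₀A.2
  have ht₀y : t₀ < y := by
    rcases lt_or_eq_of_le ht₀.2 with h | h
    · exact h
    · exfalso; rw [h] at hvt₀; exact absurd hvt₀ (not_le.2 hvI.1)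
  -- IVT on [t₀, y] to get g t₀ = v
  have hgt₀ : g t₀ = v := by
    have hcont : ContinuousOn g (Set.Icc t₀ y) := hg.mono (Set.Icc_subset_Icc ht₀.1 le_rfl)
    have hmem : v ∈ Set.Icc (g y) (g t₀) := ⟨hvI.1.le, hvt₀⟩
    obtain ⟨u, hu, hgu⟩ := intermediate_value_Icc' ht₀y.le hcont hmem
    have huA : u ∈ A := ⟨⟨ht₀.1.trans hu.1, hu.2⟩, by simp [Set.mem_preimage, hgu]⟩
    have : u ≤ t₀ := le_csSup hAbdd huA
    have : u = t₀ := le_antisymm this hu.1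
    rw [← this]; exact hgu
  have ht₀C : t₀ ∉ C := fun hc => hvim ⟨t₀, ⟨hc, ht₀⟩, hgt₀⟩
  obtain ⟨ε, hε, hball⟩ := Metric.isOpen_iff.1 (isOpen_compl_iff.2 isClosed_closure) t₀ ht₀C
  set s := min (t₀ + ε / 2) y with hs
  have hst₀ : t₀ < s := lt_min (by linarith) ht₀y
  have hsy : s ≤ y := min_le_right _ _
  have hsub : Set.Icc t₀ s ⊆ I \ Θ := by
    intro u hu
    have hu1 : u ∈ Set.Icc x y := ⟨ht₀.1.trans hu.1, hu.2.trans hsy⟩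
    refine ⟨hIcc hu1, fun hθ => ?_⟩
    have hub : u ∈ Metric.ball t₀ ε := by
      rw [Metric.mem_ball, Real.dist_eq, abs_of_nonneg (by linarith [hu.1])]
      have : u ≤ t₀ + ε / 2 := hu.2.trans (min_le_left _ _)
      linarith
    exact hball hub (subset_closure hθ)
  have hsegb := hseg t₀ s hst₀.le hsub
  have hgs : v ≤ g s := by
    have h1 := (abs_le.1 hsegb).2
    have : g s - g t₀ = (L : ℝ) * (s - t₀) - (f s - f t₀) := by simp [hgdef]; ring
    have h2 : (0 : ℝ) ≤ g s - g t₀ := by rw [this]; linarith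
    linarith [hgt₀]
  have hsA : s ∈ A := ⟨⟨ht₀.1.trans hst₀.le, hsy⟩, hgs⟩
  have : s ≤ t₀ := le_csSup hAbdd hsA
  linarith

lemma fwd_dir (Θ : Set ℝ) (hΘ : (closure Θ).Countable) (I : Set ℝ) (hI : I.OrdConnected)
    (f : ℝ → ℝ) (hf : ContinuousOn f I) (L : NNReal)
    (hL : ∀ x ∈ I \ Θ, ∀ y ∈ I \ Θ, intrinsicDist (I \ Θ) x y < ⊤ →
          edist (f x) (f y) ≤ L * intrinsicDist (I \ Θ) x y) :
    LipschitzOnWith L f I := by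
  rw [lipschitzOnWith_iff_dist_le_mul]
  have key : ∀ x ∈ I, ∀ y ∈ I, x ≤ y → dist (f x) (f y) ≤ L * dist x y := by
    intro x hx y hy hxy
    have h1 := fwd_one_sided Θ I hΘ hI f hf L hL x hx y hy hxy
    have hLneg : ∀ x ∈ I \ Θ, ∀ y ∈ I \ Θ, intrinsicDist (I \ Θ) x y < ⊤ →
        edist (-f x) (-f y) ≤ L * intrinsicDist (I \ Θ) x y := by
      intro a ha b hb hd
      rw [edist_neg_neg]
      exact hL a ha b hb hd
    have h2 := fwd_one_sided Θ I hΘ hI (fun t => -f t) hf.neg L hLneg x hx y hy hxy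
    simp only [neg_sub_neg] at h2
    have hd : dist x y = y - x := by rw [Real.dist_eq, abs_of_nonpos (by linarith)]; ring
    rw [Real.dist_eq, hd, abs_sub_le_iff]
    exact ⟨h2, h1⟩
  intro x hx y hy
  rcases le_total x y with h | h
  · exact key x hx y hy h
  · rw [dist_comm (f x), dist_comm x]; exact key y hy x hx h

noncomputable def cdfR (ν : Measure ℝ) (x : ℝ) : ℝ := (ν (Set.Iic x)).toReal

lemma cdfR_incr (ν : Measure ℝ) [IsFiniteMeasure ν] {s t : ℝ} (h : s ≤ t) :
    cdfR ν t - cdfR ν s = (ν (Set.Ioc s t)).toReal := by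
  have hu : ν (Set.Iic t) = ν (Set.Iic s) + ν (Set.Ioc s t) := by
    rw [← measure_union (Set.Iic_disjoint_Ioc le_rfl) measurableSet_Ioc,
      Set.Iic_union_Ioc_eq_Iic h]
  unfold cdfR
  rw [hu, ENNReal.toReal_add (measure_ne_top _ _) (measure_ne_top _ _)]
  ring

lemma cdfR_mono (ν : Measure ℝ) [IsFiniteMeasure ν] : Monotone (cdfR ν) := by
  intro s t hst
  have := cdfR_incr ν hst
  have h0 : (0:ℝ) ≤ (ν (Set.Ioc s t)).toReal := ENNReal.toReal_nonneg
  linarith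

lemma cdfR_continuous (ν : Measure ℝ) [IsFiniteMeasure ν] [NullSingletonClass ν] :
    Continuous (cdfR ν) := by
  rw [Metric.continuous_iff]
  intro x ε hε
  set u : ℕ → ℝ := fun n => 1 / (n + 1) with hu
  have hun : ∀ n, 0 < u n := fun n => by positivity
  have hiI : ⋂ n, Set.Ioc (x - u n) (x + u n) = {x} := by
    ext t
    simp only [Set.mem_iInter, Set.mem_Ioc, Set.mem_singleton_iff]
    constructor
    · intro h
      have hlim0 : Filter.Tendsto u Filter.atTop (𝓝 0) :=
        tendsto_one_div_add_atTop_nhds_zero_nat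
      have h1 : t ≤ x := by
        have hlim : Filter.Tendsto (fun n => x + u n) Filter.atTop (𝓝 x) := by
          simpa using tendsto_const_nhds.add hlim0
        exact ge_of_tendsto' hlim fun n => (h n).2
      have h2 : x ≤ t := by
        have hlim : Filter.Tendsto (fun n => x - u n) Filter.atTop (𝓝 x) := by
          simpa using tendsto_const_nhds.sub hlim0
        exact le_of_tendsto' hlim fun n => (h n).1.le
      linarith
    · rintro rfl
      exact fun n => ⟨by linarith [hun n], by linarith [hun n]⟩
  have htend : Filter.Tendsto (fun n => ν (Set.Ioc (x - u n) (x + u n))) Filter.atTop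
      (𝓝 (ν (⋂ n, Set.Ioc (x - u n) (x + u n)))) := by
    refine tendsto_measure_iInter_atTop (fun n => measurableSet_Ioc.nullMeasurableSet)
      (fun n m hnm => ?_) ⟨0, measure_ne_top _ _⟩
    have hm : u m ≤ u n := by
      apply one_div_le_one_div_of_le (by positivity)
      exact_mod_cast add_le_add_left (Nat.cast_le.2 hnm) 1
    exact Set.Ioc_subset_Ioc (by linarith) (by linarith)
  rw [hiI, measure_singleton] at htend
  have hev := htend.eventually_lt_const (show (0:ℝ≥0∞) < ENNReal.ofReal ε from
    ENNReal.ofReal_pos.2 hε)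
  obtain ⟨n, hn⟩ := hev.exists
  refine ⟨u n, hun n, fun y hy => ?_⟩
  rw [Real.dist_eq] at hy
  have habs := abs_lt.1 hy
  have hsub : Set.Ioc (min x y) (max x y) ⊆ Set.Ioc (x - u n) (x + u n) := by
    apply Set.Ioc_subset_Ioc
    · rcases le_total x y with h | h
      · rw [min_eq_left h]; linarith [hun n]
      · rw [min_eq_right h]; linarith
    · rcases le_total x y with h | h
      · rw [max_eq_right h]; linarith
      · rw [max_eq_left h]; linarith [hun n]
  have hle : dist (cdfR ν y) (cdfR ν x) ≤ (ν (Set.Ioc (min x y) (max x y))).toReal := by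
    rcases le_total x y with h | h
    · rw [Real.dist_eq, abs_of_nonneg (sub_nonneg.2 (cdfR_mono ν h)),
        min_eq_left h, max_eq_right h]
      exact le_of_eq (cdfR_incr ν h)
    · rw [Real.dist_eq, abs_of_nonpos (sub_nonpos.2 (cdfR_mono ν h)),
        min_eq_right h, max_eq_left h, neg_sub]
      exact le_of_eq (cdfR_incr ν h)
  calc dist (cdfR ν y) (cdfR ν x)
      ≤ (ν (Set.Ioc (min x y) (max x y))).toReal := hle
    _ ≤ (ν (Set.Ioc (x - u n) (x + u n))).toReal :=
        ENNReal.toReal_mono (measure_ne_top _ _) (measure_mono hsub)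
    _ < ε := ENNReal.toReal_lt_of_lt_ofReal hn

lemma measure_Ioc_zero_of_disjoint {ν : Measure ℝ} [NullSingletonClass ν] {C : Set ℝ}
    (hν : ν (Set.univ \ C) = 0) {s t : ℝ} (hdisj : Set.Ioo s t ∩ C = ∅) :
    ν (Set.Ioc s t) = 0 := by
  have hsub : Set.Ioc s t ⊆ (Set.univ \ C) ∪ {t} := by
    intro w hw
    rcases eq_or_lt_of_le hw.2 with h | h
    · exact Or.inr (by simp [h])
    · refine Or.inl ⟨trivial, fun hc => ?_⟩
      have : w ∈ Set.Ioo s t ∩ C := ⟨⟨hw.1, h⟩, hc⟩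
      rw [hdisj] at this
      exact this
  refine le_antisymm ?_ (zero_le)
  calc ν (Set.Ioc s t) ≤ ν (Set.univ \ C) + ν {t} :=
        (measure_mono hsub).trans (measure_union_le _ _)
    _ = 0 := by rw [hν, measure_singleton, add_zero]

lemma cdfR_ker {Θ : Set ℝ} {ν : Measure ℝ} [IsFiniteMeasure ν] [NullSingletonClass ν]
    (hν : ν (Set.univ \ closure Θ) = 0) {x y : ℝ}
    (h : Set.uIcc x y ⊆ Set.univ \ Θ) : cdfR ν x = cdfR ν y := by
  wlog hxy : x ≤ y generalizing x y
  · exact (this (Set.uIcc_comm x y ▸ h) (le_of_not_ge hxy)).symm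
  have hdisj : Set.Ioo x y ∩ closure Θ = ∅ := by
    rw [Set.eq_empty_iff_forall_notMem]
    rintro w ⟨hwI, hwC⟩
    rcases mem_closure_iff.1 hwC _ isOpen_Ioo hwI with ⟨θ, hθI, hθΘ⟩
    have : θ ∈ Set.univ \ Θ := h (by
      rw [Set.uIcc_of_le hxy]; exact Set.Ioo_subset_Icc_self hθI)
    exact this.2 hθΘ
  have h0 := measure_Ioc_zero_of_disjoint hν hdisj
  have hi := cdfR_incr ν hxy
  rw [h0] at hi
  simp at hi
  linarith

lemma uIcc_subset_of_intrinsic_lt_top {E : Set ℝ} {x y : ℝ}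
    (h : intrinsicDist E x y < ⊤) : Set.uIcc x y ⊆ E := by
  obtain ⟨LL, ⟨γ, a, b, ⟨hab, hcont, hga, hgb, hmem⟩, hfin, hLL⟩, _⟩ := sInf_lt_iff.1 h
  have hconn : IsPreconnected (γ '' Set.Icc a b) := isPreconnected_Icc.image γ hcont
  have hx : x ∈ γ '' Set.Icc a b := ⟨a, Set.left_mem_Icc.2 hab, hga⟩
  have hy : y ∈ γ '' Set.Icc a b := ⟨b, Set.right_mem_Icc.2 hab, hgb⟩
  have hord : (γ '' Set.Icc a b).OrdConnected := hconn.ordConnected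
  refine (hord.uIcc_subset hx hy).trans ?_
  rintro z ⟨t, ht, rfl⟩
  exact hmem t ht

lemma increase_bound {ν : Measure ℝ} [IsFiniteMeasure ν] [NullSingletonClass ν] {C : Set ℝ}
    (hCc : IsClosed C) (hν : ν (Set.univ \ C) = 0) {U : Set ℝ} (hU : IsOpen U) (hCU : C ⊆ U)
    {L' : NNReal} (hLip : ∀ s t : ℝ, s ≤ t → cdfR ν t - cdfR ν s ≤ L' * (t - s))
    {A B : ℝ} (hAB : A ≤ B) :
    (ν (Set.Ioc A B)).toReal ≤ L' * (volume (U ∩ Set.Ioc A B)).toReal := by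
  set Λ : ℝ → ℝ := fun x => (volume (U ∩ Set.Ioc A x)).toReal with hΛ
  have hfin : ∀ x : ℝ, volume (U ∩ Set.Ioc A x) ≠ ⊤ :=
    fun x => ((measure_mono Set.inter_subset_right).trans_lt measure_Ioc_lt_top).ne
  have hΛmono : Monotone Λ := fun s t hst => ENNReal.toReal_mono (hfin t)
    (measure_mono (Set.inter_subset_inter_right _ (Set.Ioc_subset_Ioc_right hst)))
  have hΛlip : ∀ s t : ℝ, s ≤ t → Λ t - Λ s ≤ t - s := by
    intro s t hst
    have hsub : U ∩ Set.Ioc A t ⊆ (U ∩ Set.Ioc A s) ∪ Set.Ioc s t := by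
      rintro w ⟨hw1, hw2⟩
      rcases le_or_gt w s with h | h
      · exact Or.inl ⟨hw1, hw2.1, h⟩
      · exact Or.inr ⟨h, hw2.2⟩
    have h1 : volume (U ∩ Set.Ioc A t) ≤ volume (U ∩ Set.Ioc A s) + ENNReal.ofReal (t - s) := by
      calc volume (U ∩ Set.Ioc A t) ≤ volume ((U ∩ Set.Ioc A s) ∪ Set.Ioc s t) :=
            measure_mono hsub
        _ ≤ volume (U ∩ Set.Ioc A s) + volume (Set.Ioc s t) := measure_union_le _ _
        _ = volume (U ∩ Set.Ioc A s) + ENNReal.ofReal (t - s) := by rw [Real.volume_Ioc]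
    have h2 := ENNReal.toReal_mono
      (ENNReal.add_ne_top.2 ⟨hfin s, ENNReal.ofReal_ne_top⟩) h1
    rw [ENNReal.toReal_add (hfin s) ENNReal.ofReal_ne_top,
      ENNReal.toReal_ofReal (by linarith)] at h2
    simp only [hΛ]
    linarith
  have hΛcont : Continuous Λ := by
    have : LipschitzWith 1 Λ := by
      apply LipschitzWith.of_dist_le_mul
      intro s t
      rw [NNReal.coe_one, one_mul, Real.dist_eq, Real.dist_eq]
      rcases le_total s t with h | h
      · rw [abs_of_nonpos (by linarith [hΛmono h]), abs_of_nonpos (by linarith), neg_sub, neg_sub]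
        exact hΛlip s t h
      · rw [abs_of_nonneg (by linarith [hΛmono h]), abs_of_nonneg (by linarith)]
        exact hΛlip t s h
    exact this.continuous
  have hFcont : Continuous (cdfR ν) := cdfR_continuous ν
  set G : ℝ → ℝ := fun x => (L' : ℝ) * Λ x - cdfR ν x with hG
  have hGcont : Continuous G := (continuous_const.mul hΛcont).sub hFcont
  set S := Set.Icc A B ∩ G ⁻¹' (Set.Ici (G A)) with hS
  have hSA : A ∈ S := ⟨Set.left_mem_Icc.2 hAB, Set.mem_preimage.2 (Set.mem_Ici.2 le_rfl)⟩
  have hScl : IsClosed S := isClosed_Icc.inter (isClosed_Ici.preimage hGcont)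
  have hSbdd : BddAbove S := ⟨B, fun w hw => hw.1.2⟩
  set t₀ := sSup S with ht₀def
  have ht₀S : t₀ ∈ S := hScl.csSup_mem ⟨A, hSA⟩ hSbdd
  have key : ∀ s, t₀ < s → s ≤ B → G t₀ ≤ G s → False := by
    intro s h1 h2 h3
    have hsS : s ∈ S := ⟨⟨ht₀S.1.1.trans h1.le, h2⟩, le_trans ht₀S.2 h3⟩
    linarith [le_csSup hSbdd hsS]
  have ht₀B : t₀ = B := by
    by_contra hne
    have ht₀B' : t₀ < B := lt_of_le_of_ne ht₀S.1.2 hne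
    by_cases hmem : t₀ ∈ U
    · obtain ⟨ε, hε, hball⟩ := Metric.isOpen_iff.1 hU t₀ hmem
      set s := min (t₀ + ε / 2) B with hs
      have hst₀ : t₀ < s := lt_min (by linarith) ht₀B'
      have hsB : s ≤ B := min_le_right _ _
      have hIocU : Set.Ioc t₀ s ⊆ U := by
        intro w hw
        apply hball
        rw [Metric.mem_ball, Real.dist_eq, abs_of_pos (by linarith [hw.1])]
        have := hw.2.trans (min_le_left _ _); linarith
      have hΛge : s - t₀ ≤ Λ s - Λ t₀ := by
        have hdisj2 : Disjoint (U ∩ Set.Ioc A t₀) (Set.Ioc t₀ s) :=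
          Set.disjoint_left.2 fun w h1 h2 => absurd h1.2.2 (not_le.2 h2.1)
        have hsub2 : (U ∩ Set.Ioc A t₀) ∪ Set.Ioc t₀ s ⊆ U ∩ Set.Ioc A s := by
          rintro w (⟨h1, h2⟩ | h1)
          · exact ⟨h1, h2.1, h2.2.trans hst₀.le⟩
          · exact ⟨hIocU h1, lt_of_le_of_lt ht₀S.1.1 h1.1, h1.2⟩
        have h1 : volume (U ∩ Set.Ioc A t₀) + ENNReal.ofReal (s - t₀) ≤
            volume (U ∩ Set.Ioc A s) := by
          rw [← Real.volume_Ioc, ← measure_union hdisj2 measurableSet_Ioc]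
          exact measure_mono hsub2
        have h2 := ENNReal.toReal_mono (hfin s) h1
        rw [ENNReal.toReal_add (hfin t₀) ENNReal.ofReal_ne_top,
          ENNReal.toReal_ofReal (by linarith)] at h2
        simp only [hΛ]
        linarith
      have hFle := hLip t₀ s hst₀.le
      refine key s hst₀ hsB ?_
      simp only [hG]
      nlinarith [L'.coe_nonneg]
    · have hmemC : t₀ ∉ C := fun h => hmem (hCU h)
      obtain ⟨ε, hε, hball⟩ := Metric.isOpen_iff.1 (isOpen_compl_iff.2 hCc) t₀ hmemC
      set s := min (t₀ + ε / 2) B with hs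
      have hst₀ : t₀ < s := lt_min (by linarith) ht₀B'
      have hsB : s ≤ B := min_le_right _ _
      have hzero : ν (Set.Ioc t₀ s) = 0 := by
        have hsub3 : Set.Ioc t₀ s ⊆ Set.univ \ C := by
          intro w hw
          refine ⟨trivial, fun hc => ?_⟩
          have hwb : w ∈ Metric.ball t₀ ε := by
            rw [Metric.mem_ball, Real.dist_eq, abs_of_pos (by linarith [hw.1])]
            have := hw.2.trans (min_le_left _ _); linarith
          exact hball hwb hc
        exact le_antisymm ((measure_mono hsub3).trans hν.le) (zero_le)
      have hF : cdfR ν s - cdfR ν t₀ = 0 := by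
        rw [cdfR_incr ν hst₀.le, hzero]; simp
      have hΛm := hΛmono hst₀.le
      refine key s hst₀ hsB ?_
      simp only [hG]
      nlinarith [L'.coe_nonneg]
  have hGB : G A ≤ G B := ht₀B ▸ ht₀S.2
  have hΛA : Λ A = 0 := by simp [hΛ]
  have hFAB := cdfR_incr ν hAB
  simp only [hG, hΛA, mul_zero] at hGB
  simp only [hΛ] at hGB
  linarith

lemma rev_case (Θ : Set ℝ) (f : ℝ → ℝ) (hcont : Continuous f)
    (hker : ∀ x y : ℝ, Set.uIcc x y ⊆ Set.univ \ Θ → f x = f y)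
    (hRHS : ∀ I : Set ℝ, I.OrdConnected → ∀ f : ℝ → ℝ, ContinuousOn f I →
        (∃ L : NNReal, ∀ x ∈ I \ Θ, ∀ y ∈ I \ Θ, intrinsicDist (I \ Θ) x y < ⊤ →
          edist (f x) (f y) ≤ L * intrinsicDist (I \ Θ) x y) →
        ∃ L' : NNReal, LipschitzOnWith L' f I) :
    ∃ L' : NNReal, LipschitzOnWith L' f Set.univ := by
  apply hRHS Set.univ Set.ordConnected_univ f hcont.continuousOn
  refine ⟨0, fun x _ y _ hd => ?_⟩
  have hxy : f x = f y := hker x y (uIcc_subset_of_intrinsic_lt_top hd)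
  rw [hxy]
  simp

lemma rev_case1 (Θ : Set ℝ) (hC : ¬(closure Θ).Countable) (hvol : volume (closure Θ) = 0)
    (hRHS : ∀ I : Set ℝ, I.OrdConnected → ∀ f : ℝ → ℝ, ContinuousOn f I →
        (∃ L : NNReal, ∀ x ∈ I \ Θ, ∀ y ∈ I \ Θ, intrinsicDist (I \ Θ) x y < ⊤ →
          edist (f x) (f y) ≤ L * intrinsicDist (I \ Θ) x y) →
        ∃ L' : NNReal, LipschitzOnWith L' f I) : False := by
  have hn : ∃ n : ℕ, ¬(closure Θ ∩ Set.Icc (-(n:ℝ)) n).Countable := by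
    by_contra hall
    push_neg at hall
    apply hC
    have hcov : closure Θ ⊆ ⋃ n : ℕ, closure Θ ∩ Set.Icc (-(n:ℝ)) n := by
      intro x hx
      refine Set.mem_iUnion.2 ⟨⌈|x|⌉₊, hx, ?_⟩
      have h1 : |x| ≤ (⌈|x|⌉₊ : ℝ) := Nat.le_ceil _
      have h2 := abs_le.1 h1
      exact ⟨h2.1, h2.2⟩
    exact (Set.countable_iUnion hall).mono hcov
  obtain ⟨n, hCn⟩ := hn
  set C' := closure Θ ∩ Set.Icc (-(n:ℝ)) n with hC'def
  have hC'cl : IsClosed C' := isClosed_closure.inter isClosed_Icc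
  haveI hPolish : PolishSpace C' := hC'cl.polishSpace
  have hC'unc : ¬Countable C' := fun h => hCn (Set.countable_coe_iff.1 h)
  have hRunc : ¬Countable ℝ := fun h => Cardinal.not_countable_real Set.countable_univ
  let e : ↥C' ≃ᵐ ℝ := PolishSpace.measurableEquivOfNotCountable hC'unc hRunc
  let j : ℝ → ℝ := fun x => ((e.symm x : ↥C') : ℝ)
  have hjmeas : Measurable j := measurable_subtype_coe.comp e.symm.measurable
  have hjC' : ∀ x, j x ∈ C' := fun x => (e.symm x).2
  have hjinj : Function.Injective j := fun a b hab =>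
    e.symm.injective (Subtype.coe_injective hab)
  set μ₀ : Measure ℝ := volume.restrict (Set.Icc (0:ℝ) 1) with hμ₀
  have hμ₀univ : μ₀ Set.univ = 1 := by
    rw [hμ₀, Measure.restrict_apply_univ, Real.volume_Icc]
    norm_num
  set μ : Measure ℝ := Measure.map j μ₀ with hμ
  have hμ_apply : ∀ s : Set ℝ, MeasurableSet s → μ s = μ₀ (j ⁻¹' s) := fun s hs =>
    Measure.map_apply hjmeas hs
  have hμuniv : μ Set.univ = 1 := by
    rw [hμ_apply _ MeasurableSet.univ, Set.preimage_univ, hμ₀univ]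
  haveI : IsFiniteMeasure μ := ⟨by rw [hμuniv]; exact ENNReal.one_lt_top⟩
  haveI : NullSingletonClass μ := by
    constructor
    intro x
    rw [hμ_apply _ (measurableSet_singleton x)]
    have hss : (j ⁻¹' {x}).Subsingleton := fun a ha b hb => hjinj (by
      simp only [Set.mem_preimage, Set.mem_singleton_iff] at ha hb
      rw [ha, hb])
    have h1 : μ₀ (j ⁻¹' {x}) = volume (j ⁻¹' {x} ∩ Set.Icc 0 1) :=
      Measure.restrict_apply (hjmeas (measurableSet_singleton x))
    rw [h1]
    exact le_antisymm ((measure_mono Set.inter_subset_left).trans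
      (hss.measure_zero volume).le) (zero_le)
  have hμnullC' : μ (Set.univ \ C') = 0 := by
    rw [hμ_apply _ (MeasurableSet.univ.diff hC'cl.measurableSet)]
    have hpre : j ⁻¹' (Set.univ \ C') = ∅ := by
      ext x
      simp only [Set.mem_preimage, Set.mem_diff, Set.mem_univ, true_and,
        Set.mem_empty_iff_false, iff_false, not_not]
      exact hjC' x
    rw [hpre, measure_empty]
  have hμnullC : μ (Set.univ \ closure Θ) = 0 := by
    refine le_antisymm (le_trans (measure_mono ?_) hμnullC'.le) (zero_le)
    exact Set.diff_subset_diff_right Set.inter_subset_left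
  obtain ⟨L', hLip⟩ := rev_case Θ (cdfR μ) (cdfR_continuous μ)
      (fun x y h => cdfR_ker hμnullC h) hRHS
  rw [lipschitzOnWith_iff_dist_le_mul] at hLip
  have hLip' : ∀ s t : ℝ, s ≤ t → cdfR μ t - cdfR μ s ≤ L' * (t - s) := by
    intro s t hst
    have h1 := hLip t (Set.mem_univ t) s (Set.mem_univ s)
    rw [Real.dist_eq, Real.dist_eq] at h1
    have h2 := le_trans (le_abs_self _) h1
    rw [abs_of_nonneg (by linarith : (0:ℝ) ≤ t - s)] at h2
    exact h2
  have hvolC' : volume C' = 0 :=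
    le_antisymm ((measure_mono Set.inter_subset_left).trans hvol.le) (zero_le)
  have hr : volume C' < ENNReal.ofReal (1 / (2 * ((L':ℝ) + 1))) := by
    rw [hvolC']
    exact ENNReal.ofReal_pos.2 (by positivity)
  obtain ⟨U, hUC, hUopen, hUvol⟩ := Set.exists_isOpen_lt_of_lt C' _ hr
  have hABle : (-(n:ℝ) - 1) ≤ (n:ℝ) + 1 := by
    have : (0:ℝ) ≤ n := Nat.cast_nonneg n
    linarith
  have hbound := increase_bound hC'cl hμnullC' hUopen hUC hLip' hABle
  have hμIoc : μ (Set.Ioc (-(n:ℝ) - 1) ((n:ℝ) + 1)) = 1 := by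
    rw [hμ_apply _ measurableSet_Ioc]
    have hpre : j ⁻¹' (Set.Ioc (-(n:ℝ) - 1) ((n:ℝ) + 1)) = Set.univ := by
      ext x
      simp only [Set.mem_preimage, Set.mem_Ioc, Set.mem_univ, iff_true]
      have h2 := (hjC' x).2
      rw [Set.mem_Icc] at h2
      exact ⟨by linarith [h2.1], by linarith [h2.2]⟩
    rw [hpre, hμ₀univ]
  rw [hμIoc] at hbound
  have hUsmall : (volume (U ∩ Set.Ioc (-(n:ℝ) - 1) ((n:ℝ) + 1))).toReal ≤
      1 / (2 * ((L':ℝ) + 1)) := by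
    have h1 : volume (U ∩ Set.Ioc (-(n:ℝ) - 1) ((n:ℝ) + 1)) <
        ENNReal.ofReal (1 / (2 * ((L':ℝ) + 1))) :=
      lt_of_le_of_lt (measure_mono Set.inter_subset_left) hUvol
    exact (ENNReal.toReal_lt_of_lt_ofReal h1).le
  have htoReal1 : ((1 : ℝ≥0∞)).toReal = 1 := by simp
  rw [htoReal1] at hbound
  have hVnn : (0:ℝ) ≤ (volume (U ∩ Set.Ioc (-(n:ℝ) - 1) ((n:ℝ) + 1))).toReal :=
    ENNReal.toReal_nonneg
  have hLnn : (0:ℝ) ≤ (L' : ℝ) := L'.coe_nonneg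
  have hmul := mul_le_mul_of_nonneg_left hUsmall hLnn
  have hlt : (L':ℝ) * (1 / (2 * ((L':ℝ) + 1))) < 1 := by
    rw [mul_one_div, div_lt_one (by positivity)]
    linarith
  linarith

lemma rev_case2 (Θ : Set ℝ) (hvol : volume (closure Θ) ≠ 0)
    (hRHS : ∀ I : Set ℝ, I.OrdConnected → ∀ f : ℝ → ℝ, ContinuousOn f I →
        (∃ L : NNReal, ∀ x ∈ I \ Θ, ∀ y ∈ I \ Θ, intrinsicDist (I \ Θ) x y < ⊤ →
          edist (f x) (f y) ≤ L * intrinsicDist (I \ Θ) x y) →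
        ∃ L' : NNReal, LipschitzOnWith L' f I) : False := by
  have hCmeas : MeasurableSet (closure Θ) := isClosed_closure.measurableSet
  have hae := Besicovitch.ae_tendsto_measure_inter_div_of_measurableSet volume hCmeas
  obtain ⟨a, haC, htend⟩ := Measure.exists_mem_of_measure_ne_zero_of_ae hvol (ae_restrict_of_ae hae)
  rw [Set.indicator_of_mem haC, Pi.one_apply] at htend
  set D := closure Θ ∩ Set.Icc (a - 1) (a + 1) with hD
  set ν : Measure ℝ := volume.restrict (D ∩ Set.Ioi a) with hν
  have hν_apply : ∀ s : Set ℝ, MeasurableSet s → ν s = volume (s ∩ (D ∩ Set.Ioi a)) :=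
    fun s hs => Measure.restrict_apply hs
  haveI : IsFiniteMeasure ν := by
    constructor
    rw [hν, Measure.restrict_apply_univ]
    exact lt_of_le_of_lt (measure_mono (fun x hx => hx.1.2)) measure_Icc_lt_top
  have hνnull : ν (Set.univ \ closure Θ) = 0 := by
    rw [hν_apply _ (MeasurableSet.univ.diff hCmeas)]
    have hemp : (Set.univ \ closure Θ) ∩ (D ∩ Set.Ioi a) = ∅ := by
      ext x
      simp only [Set.mem_inter_iff, Set.mem_diff, Set.mem_univ, true_and,
        Set.mem_empty_iff_false, iff_false, hD]
      rintro ⟨hx1, ⟨hx2, _⟩, _⟩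
      exact hx1 hx2
    rw [hemp, measure_empty]
  set f : ℝ → ℝ := fun x => Real.sqrt (cdfR ν x) with hf
  obtain ⟨L', hLip⟩ := rev_case Θ f (Real.continuous_sqrt.comp (cdfR_continuous ν))
      (fun x y h => by simp only [hf]; rw [cdfR_ker hνnull h]) hRHS
  rw [lipschitzOnWith_iff_dist_le_mul] at hLip
  -- eventual facts
  have hev1 : ∀ᶠ r in 𝓝[>] (0:ℝ), ENNReal.ofReal (3/4) <
      volume (closure Θ ∩ Metric.closedBall a r) / volume (Metric.closedBall a r) :=
    htend.eventually_const_lt (by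
      rw [show ((3:ℝ)/4) = (3/4 : ℝ) from rfl]
      exact ENNReal.ofReal_lt_one.2 (by norm_num))
  set δ := min 1 (1 / (4 * ((L':ℝ) + 1)^2)) with hδ
  have hδpos : 0 < δ := lt_min one_pos (by positivity)
  have hev2 : ∀ᶠ r in 𝓝[>] (0:ℝ), r < δ := by
    filter_upwards [mem_nhdsWithin_of_mem_nhds (Iio_mem_nhds hδpos)] with r hr
    exact hr
  have hev3 : ∀ᶠ r in 𝓝[>] (0:ℝ), 0 < r := by
    filter_upwards [self_mem_nhdsWithin] with r hr
    exact hr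
  obtain ⟨r, h1, h2, h3⟩ := (hev1.and (hev2.and hev3)).exists
  have hrle1 : r ≤ 1 := le_of_lt (lt_of_lt_of_le h2 (min_le_left _ _))
  have hrlt : r < 1 / (4 * ((L':ℝ) + 1)^2) := lt_of_lt_of_le h2 (min_le_right _ _)
  have hrpos : 0 < r := h3
  have hcb : Metric.closedBall a r = Set.Icc (a - r) (a + r) := Real.closedBall_eq_Icc
  have hcbvol : volume (Metric.closedBall a r) = ENNReal.ofReal (2 * r) :=
    Real.volume_closedBall a r
  set V := (volume (closure Θ ∩ Metric.closedBall a r)).toReal with hV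
  have hVfin : volume (closure Θ ∩ Metric.closedBall a r) ≠ ⊤ :=
    ((measure_mono Set.inter_subset_right).trans_lt
      (by rw [hcbvol]; exact ENNReal.ofReal_lt_top)).ne
  have hdivfin : volume (closure Θ ∩ Metric.closedBall a r) /
      volume (Metric.closedBall a r) ≠ ⊤ := by
    refine (ENNReal.div_lt_top hVfin ?_).ne
    rw [hcbvol]
    exact (ENNReal.ofReal_pos.2 (by linarith)).ne'
  have h1' : (3/4 : ℝ) < V / (2 * r) := by
    have hh := (ENNReal.toReal_lt_toReal ENNReal.ofReal_ne_top hdivfin).2 h1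
    rw [ENNReal.toReal_ofReal (by norm_num)] at hh
    rw [ENNReal.toReal_div, hcbvol, ENNReal.toReal_ofReal (by linarith)] at hh
    exact hh
  have hVgt : (3/2) * r < V := by
    have h2r : (0:ℝ) < 2 * r := by linarith
    linarith [(lt_div_iff₀ h2r).1 h1']
  have hIicEq : Set.Iic (a + r) ∩ (D ∩ Set.Ioi a) = D ∩ Set.Ioc a (a + r) := by
    ext x
    simp only [Set.mem_inter_iff, Set.mem_Iic, Set.mem_Ioi, Set.mem_Ioc]
    tauto
  have hcdfr : cdfR ν (a + r) = (volume (D ∩ Set.Ioc a (a + r))).toReal := by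
    have hh := hν_apply (Set.Iic (a + r)) measurableSet_Iic
    rw [hIicEq] at hh
    unfold cdfR
    rw [hh]
  have hcdfa : cdfR ν a = 0 := by
    have hemp2 : Set.Iic a ∩ (D ∩ Set.Ioi a) = (∅ : Set ℝ) := by
      ext x
      simp only [Set.mem_inter_iff, Set.mem_Iic, Set.mem_Ioi, Set.mem_empty_iff_false,
        iff_false, not_and]
      intro hx1 _
      linarith
    have hh := hν_apply (Set.Iic a) measurableSet_Iic
    rw [hemp2, measure_empty] at hh
    unfold cdfR
    rw [hh]
    simp
  have hsubV : closure Θ ∩ Metric.closedBall a r ⊆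
      (D ∩ Set.Ioc a (a + r)) ∪ Set.Icc (a - r) a := by
    rintro x ⟨hxC, hxB⟩
    rw [hcb] at hxB
    rcases le_or_gt x a with h | h
    · exact Or.inr ⟨hxB.1, h⟩
    · refine Or.inl ⟨⟨hxC, ?_, ?_⟩, h, hxB.2⟩
      · linarith
      · linarith [hxB.2]
  have hWfin : volume (D ∩ Set.Ioc a (a + r)) ≠ ⊤ :=
    ((measure_mono Set.inter_subset_right).trans_lt measure_Ioc_lt_top).ne
  have hVle : V ≤ (volume (D ∩ Set.Ioc a (a + r))).toReal + r := by
    have hm : volume (closure Θ ∩ Metric.closedBall a r) ≤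
        volume (D ∩ Set.Ioc a (a + r)) + volume (Set.Icc (a - r) a) :=
      (measure_mono hsubV).trans (measure_union_le _ _)
    have hIccfin : volume (Set.Icc (a - r) a) ≠ ⊤ := by
      rw [Real.volume_Icc]; exact ENNReal.ofReal_ne_top
    have hh := ENNReal.toReal_mono (ENNReal.add_ne_top.2 ⟨hWfin, hIccfin⟩) hm
    rw [ENNReal.toReal_add hWfin hIccfin, Real.volume_Icc,
      ENNReal.toReal_ofReal (by linarith)] at hh
    have : a - (a - r) = r := by ring
    rw [this] at hh
    exact hh
  have hW : r / 2 ≤ cdfR ν (a + r) := by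
    rw [hcdfr]
    linarith
  have hfa : f a = 0 := by simp [hf, hcdfa]
  have hfr : Real.sqrt (r / 2) ≤ (L' : ℝ) * r := by
    have hl := hLip (a + r) (Set.mem_univ _) a (Set.mem_univ _)
    rw [Real.dist_eq, Real.dist_eq, hfa, sub_zero,
      abs_of_nonneg (Real.sqrt_nonneg _), show a + r - a = r by ring,
      abs_of_pos hrpos] at hl
    calc Real.sqrt (r / 2) ≤ f (a + r) := Real.sqrt_le_sqrt hW
      _ ≤ (L' : ℝ) * r := hl
  have hsq : r / 2 ≤ ((L' : ℝ) * r)^2 := by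
    calc r / 2 = Real.sqrt (r / 2) ^ 2 := (Real.sq_sqrt (by positivity)).symm
      _ ≤ ((L' : ℝ) * r)^2 := pow_le_pow_left₀ (Real.sqrt_nonneg _) hfr 2
  have hLnn : (0:ℝ) ≤ (L' : ℝ) := L'.coe_nonneg
  set K : ℝ := (L' : ℝ) + 1 with hK
  have hKpos : (0:ℝ) < K := by rw [hK]; linarith
  have e1 : r * r < r * (1 / (4 * K^2)) := by
    apply mul_lt_mul_of_pos_left _ hrpos
    rw [hK]
    exact hrlt
  have c1 : ((L' : ℝ) * r)^2 ≤ K^2 * (r * r) := by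
    rw [hK]
    nlinarith [mul_nonneg hLnn (mul_pos hrpos hrpos).le, sq_nonneg r]
  have c2 : K^2 * (r * r) < K^2 * (r * (1 / (4 * K^2))) :=
    mul_lt_mul_of_pos_left e1 (by positivity)
  have e3 : K^2 * (r * (1 / (4 * K^2))) = r / 4 := by
    field_simp
  have hfinal : r / 2 < r / 4 := by
    calc r / 2 ≤ ((L' : ℝ) * r) ^ 2 := hsq
      _ ≤ K ^ 2 * (r * r) := c1
      _ < K ^ 2 * (r * (1 / (4 * K ^ 2))) := c2
      _ = r / 4 := e3
  linarith

/-- One-dimensional permeability criterion: `Θ ⊆ ℝ` has countable closure iff every function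
on an interval which is continuous and intrinsically Lipschitz with exception set `Θ` is
Lipschitz. -/
theorem stmt10 (Θ : Set ℝ) :
    (closure Θ).Countable ↔
      ∀ I : Set ℝ, I.OrdConnected → ∀ f : ℝ → ℝ, ContinuousOn f I →
        (∃ L : NNReal, ∀ x ∈ I \ Θ, ∀ y ∈ I \ Θ, intrinsicDist (I \ Θ) x y < ⊤ →
          edist (f x) (f y) ≤ L * intrinsicDist (I \ Θ) x y) →
        ∃ L' : NNReal, LipschitzOnWith L' f I := by
  constructor
  · rintro hTheta I hI f hf ⟨L, hL⟩
    exact ⟨L, fwd_dir Θ hTheta I hI f hf L hL⟩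
  · intro hRHS
    by_contra hC
    rcases eq_or_ne (volume (closure Θ)) 0 with h | h
    · exact rev_case1 Θ hC h hRHS
    · exact rev_case2 Θ h hRHS
end

section
/- Let Θ ⊆ ℝ have uncountable closure. Then there exists a continuous function f : ℝ → ℝ which is constant on every connected component of ℝ \ closure(Θ) (hence is 0-Lipschitz with respect to the intrinsic metric on ℝ \ closure(Θ)), but f is not Lipschitz continuous on ℝ. -/
open Set MeasureTheory ENNReal

section Aux
open Set MeasureTheory ENNReal ProbabilityTheory Filter Metric Topology



-- auxiliary: constancy on connected components from constancy on Ioc subsets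
lemma aux_const_on_components {C : Set ℝ} {f : ℝ → ℝ}
    (hf : ∀ a b : ℝ, a ≤ b → Ioc a b ⊆ Cᶜ → f b = f a) :
    ∀ x ∈ Cᶜ, ∀ y ∈ connectedComponentIn Cᶜ x, f y = f x := by
  intro x hx y hy
  have hxm : x ∈ connectedComponentIn Cᶜ x := mem_connectedComponentIn hx
  have hoc : OrdConnected (connectedComponentIn Cᶜ x) :=
    (isPreconnected_connectedComponentIn).ordConnected
  have hsub : connectedComponentIn Cᶜ x ⊆ Cᶜ := connectedComponentIn_subset _ _
  rcases le_total x y with hxy | hyx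
  · exact hf x y hxy fun t ht => hsub (hoc.out hxm hy ⟨le_of_lt ht.1, ht.2⟩)
  · exact (hf y x hyx fun t ht => hsub (hoc.out hy hxm ⟨le_of_lt ht.1, ht.2⟩)).symm



lemma aux_caseB {C : Set ℝ} (hCc : IsClosed C) (h : ¬ C.Countable)
    (hvol : volume C = 0) :
    ∃ f : ℝ → ℝ, Continuous f ∧
      (∀ a b : ℝ, a ≤ b → Ioc a b ⊆ Cᶜ → f b = f a) ∧
      ¬ ∃ L : NNReal, LipschitzWith L f := by
  have hCm : MeasurableSet C := hCc.measurableSet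
  haveI : PolishSpace C := hCc.polishSpace
  have hCu : ¬ Countable C := by rwa [Set.countable_coe_iff]
  have hRu : ¬ Countable ℝ := fun hc => Cardinal.not_countable_real (@Set.countable_univ ℝ hc)
  let e : ℝ ≃ᵐ C := PolishSpace.measurableEquivOfNotCountable hRu hCu
  have hmeas : Measurable fun x : ℝ => ((e x : ℝ)) :=
    measurable_subtype_coe.comp e.measurable
  set μ0 : Measure ℝ := volume.restrict (Icc (0:ℝ) 1) with hμ0
  set ν : Measure ℝ := Measure.map (fun x : ℝ => ((e x : ℝ))) μ0 with hν
  have hrange : ∀ x : ℝ, ((e x : ℝ)) ∈ C := fun x => (e x).2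
  have hνC : ν C = 1 := by
    rw [hν, Measure.map_apply hmeas hCm]
    have : (fun x : ℝ => ((e x : ℝ))) ⁻¹' C = univ := eq_univ_of_forall fun x => hrange x
    rw [this, hμ0, Measure.restrict_apply_univ, Real.volume_Icc]
    norm_num
  haveI : IsProbabilityMeasure ν := by
    constructor
    rw [hν, Measure.map_apply hmeas MeasurableSet.univ, preimage_univ, hμ0,
      Measure.restrict_apply_univ, Real.volume_Icc]
    norm_num
  haveI : NoAtoms ν := by
    constructor
    intro x
    rw [hν, Measure.map_apply hmeas (measurableSet_singleton x)]
    have hsub : ((fun x : ℝ => ((e x : ℝ))) ⁻¹' {x}).Subsingleton := by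
      intro a ha b hb
      apply e.injective
      exact Subtype.ext (ha.trans hb.symm)
    exact hsub.measure_zero _
  set f : ℝ → ℝ := fun x => cdf ν x with hf
  have hIoc : ∀ a b : ℝ, ν (Ioc a b) = ENNReal.ofReal (f b - f a) := by
    intro a b
    rw [← measure_cdf ν]
    exact (cdf ν).measure_Ioc a b
  have hmono : Monotone f := monotone_cdf ν
  have hcont : Continuous f := by
    rw [continuous_iff_continuousAt]
    intro x
    rw [hmono.continuousAt_iff_leftLim_eq_rightLim]
    have h1 : Function.rightLim f x = f x := (cdf ν).rightLim_eq x
    have h2 : Function.leftLim f x = f x := by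
      have hs := (cdf ν).measure_singleton x
      rw [measure_cdf] at hs
      have h0 : ν {x} = 0 := (this : NullSingletonClass ν).measure_singleton x
      rw [h0] at hs
      have hc : cdf ν x - Function.leftLim (cdf ν) x ≤ 0 := by
        by_contra hc
        push_neg at hc
        rw [eq_comm, ENNReal.ofReal_eq_zero] at hs
        linarith
      have hle : Function.leftLim f x ≤ f x := hmono.leftLim_le le_rfl
      have : f x ≤ Function.leftLim f x := by simpa [hf] using hc
      linarith
    rw [h1, h2]
  refine ⟨f, hcont, ?_, ?_⟩
  · -- constancy
    intro a b hab hsub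
    have hν0 : ν (Ioc a b) = 0 := by
      have hle : ν (Ioc a b) ≤ ν Cᶜ := measure_mono hsub
      have hcompl : ν Cᶜ = 0 := by
        rw [measure_compl hCm (measure_ne_top ν C), hνC, measure_univ, tsub_self]
      exact le_antisymm (hle.trans hcompl.le) zero_le
    rw [hIoc, ENNReal.ofReal_eq_zero] at hν0
    have := hmono hab
    linarith
  · -- not Lipschitz
    rintro ⟨L, hL⟩
    set L' : ℝ := (L : ℝ) + 1 with hL'
    have hL'pos : 0 < L' := by positivity
    have hGmono : Monotone fun x => L' * x - f x := by
      intro a b hab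
      have hd := hL.dist_le_mul a b
      rw [Real.dist_eq, Real.dist_eq] at hd
      have h1 : f b - f a ≤ (L : ℝ) * (b - a) := by
        have h2 : f b - f a ≤ |f a - f b| := by
          rw [abs_sub_comm]; exact le_abs_self _
        have h3 : |a - b| = b - a := by
          rw [abs_sub_comm, abs_of_nonneg (sub_nonneg.mpr hab)]
        rw [h3] at hd
        linarith
      have h4 : (L : ℝ) * (b - a) ≤ L' * (b - a) := by
        apply mul_le_mul_of_nonneg_right _ (sub_nonneg.mpr hab)
        simp [hL']
      dsimp only
      linarith
    set G : StieltjesFunction ℝ :=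
      { toFun := fun x => L' * x - f x
        mono' := hGmono
        right_continuous' := fun x =>
          ((continuous_const.mul continuous_id).sub hcont).continuousWithinAt } with hG
    have hext : ν + G.measure = (ENNReal.ofReal L') • volume := by
      refine Measure.ext_of_Ioc' _ _ (fun a b hab => ?_) (fun a b hab => ?_)
      · rw [Measure.add_apply, hIoc, G.measure_Ioc]
        exact ENNReal.add_ne_top.mpr ⟨ENNReal.ofReal_ne_top, ENNReal.ofReal_ne_top⟩
      · rw [Measure.add_apply, hIoc, G.measure_Ioc, Measure.smul_apply, Real.volume_Ioc,
          smul_eq_mul, ← ENNReal.ofReal_mul hL'pos.le]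
        rw [← ENNReal.ofReal_add (by have := hmono hab.le; linarith)
          (by have := hGmono hab.le; simpa [hG] using this)]
        congr 1
        simp only [hG]
        ring
    have h1 : (1 : ℝ≥0∞) ≤ (ν + G.measure) C := by
      rw [Measure.add_apply, hνC]; exact le_add_of_nonneg_right zero_le
    rw [hext, Measure.smul_apply, hvol, smul_eq_mul, mul_zero] at h1
    simp at h1



lemma aux_caseA {C : Set ℝ} (hCc : IsClosed C) (hvol : volume C ≠ 0) :
    ∃ f : ℝ → ℝ, Continuous f ∧
      (∀ a b : ℝ, a ≤ b → Ioc a b ⊆ Cᶜ → f b = f a) ∧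
      ¬ ∃ L : NNReal, LipschitzWith L f := by
  have hCm : MeasurableSet C := hCc.measurableSet
  -- find a bounded piece of positive measure
  obtain ⟨n, hn⟩ : ∃ n : ℕ, volume (C ∩ Icc (-(n:ℝ)) n) ≠ 0 := by
    by_contra hc
    push_neg at hc
    apply hvol
    have hcover : C ⊆ ⋃ n : ℕ, C ∩ Icc (-(n:ℝ)) n := by
      intro x hx
      obtain ⟨n, hx'⟩ := exists_nat_ge |x|
      exact mem_iUnion.mpr ⟨n, hx, abs_le.mp hx'⟩
    exact measure_mono_null hcover (measure_iUnion_null fun n => hc n)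
  set K : Set ℝ := C ∩ Icc (-(n:ℝ)) n with hK
  have hKm : MeasurableSet K := hCm.inter measurableSet_Icc
  have hKfin : volume K ≠ ⊤ :=
    ((measure_mono inter_subset_right).trans_lt (by rw [Real.volume_Icc]; exact ofReal_lt_top)).ne
  -- density point
  have hae := Besicovitch.ae_tendsto_measure_inter_div volume K
  have hres : volume.restrict K ≠ 0 := by
    intro h0
    apply hn
    rw [← Measure.restrict_apply_univ, h0, Measure.coe_zero, Pi.zero_apply]
  haveI : (ae (volume.restrict K)).NeBot := ae_neBot.mpr hres
  obtain ⟨x₀, htend⟩ := hae.exists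
  -- the CDF-like function
  set F : ℝ → ℝ := fun x => (volume (K ∩ Iic x)).toReal with hFdef
  have hsplit : ∀ a b : ℝ, a ≤ b → F b - F a = (volume (K ∩ Ioc a b)).toReal := by
    intro a b hab
    have hdecomp : K ∩ Iic b = (K ∩ Iic a) ∪ (K ∩ Ioc a b) := by
      rw [← inter_union_distrib_left]
      congr 1
      rw [Iic_union_Ioc_eq_Iic hab]
    have hdisj : Disjoint (K ∩ Iic a) (K ∩ Ioc a b) := by
      apply Disjoint.mono inter_subset_right inter_subset_right
      rw [disjoint_iff_inter_eq_empty]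
      ext t; simp only [mem_inter_iff, mem_Iic, mem_Ioc, mem_empty_iff_false, iff_false]
      rintro ⟨h1, h2, _⟩; exact absurd h1 (not_le.mpr h2)
    have := measure_union (μ := volume) hdisj (hKm.inter measurableSet_Ioc)
    rw [← hdecomp] at this
    have hfin1 : volume (K ∩ Iic a) ≠ ⊤ :=
      ((measure_mono inter_subset_left).trans_lt hKfin.lt_top).ne
    have hfin2 : volume (K ∩ Ioc a b) ≠ ⊤ :=
      ((measure_mono inter_subset_left).trans_lt hKfin.lt_top).ne
    rw [hFdef]
    dsimp only
    rw [this, ENNReal.toReal_add hfin1 hfin2]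
    ring
  have hFmono : Monotone F := fun a b hab => by
    have := hsplit a b hab
    have h0 : (0:ℝ) ≤ (volume (K ∩ Ioc a b)).toReal := ENNReal.toReal_nonneg
    linarith
  have hFlip : LipschitzWith 1 F := by
    apply LipschitzWith.of_dist_le_mul
    intro a b
    wlog hab : b ≤ a generalizing a b
    · rw [dist_comm a b, dist_comm (F a) (F b)]; exact this b a (le_of_not_ge hab)
    rw [Real.dist_eq, Real.dist_eq, NNReal.coe_one, one_mul,
      abs_of_nonneg (sub_nonneg.mpr (hFmono hab)), abs_of_nonneg (sub_nonneg.mpr hab)]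
    rw [hsplit b a hab]
    have h1 : volume (K ∩ Ioc b a) ≤ ENNReal.ofReal (a - b) := by
      refine (measure_mono inter_subset_right).trans ?_
      rw [Real.volume_Ioc]
    calc (volume (K ∩ Ioc b a)).toReal ≤ (ENNReal.ofReal (a-b)).toReal :=
          ENNReal.toReal_mono ofReal_ne_top h1
      _ = a - b := ENNReal.toReal_ofReal (sub_nonneg.mpr hab)
  set f : ℝ → ℝ := fun x => Real.sqrt (F x - F x₀) with hfd
  refine ⟨f, ?_, ?_, ?_⟩
  · exact Real.continuous_sqrt.comp (hFlip.continuous.sub continuous_const)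
  · intro a b hab hsub
    have hz : volume (K ∩ Ioc a b) = 0 := by
      have : K ∩ Ioc a b = ∅ := by
        rw [eq_empty_iff_forall_notMem]
        rintro t ⟨⟨htC, _⟩, ht2⟩
        exact hsub ht2 htC
      rw [this, measure_empty]
    have := hsplit a b hab
    rw [hz, ENNReal.toReal_zero] at this
    have hFb : F b = F a := by linarith
    rw [hfd]; dsimp only; rw [hFb]
  · rintro ⟨L, hL⟩
    set δ : ℝ := 1 / (2 * ((L:ℝ) + 1)^2) with hδdef
    have hδpos : 0 < δ := by positivity
    -- get a good radius r
    have hev1 : ∀ᶠ r in 𝓝[>] (0:ℝ),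
        (3/4 : ℝ≥0∞) < volume (K ∩ closedBall x₀ r) / volume (closedBall x₀ r) :=
      htend.eventually (eventually_gt_nhds (by
        rw [ENNReal.div_lt_iff (Or.inl (by norm_num)) (Or.inl (by norm_num))]
        norm_num))
    have hev2 : Ioo (0:ℝ) δ ∈ 𝓝[>] (0:ℝ) := Ioo_mem_nhdsGT_of_mem ⟨le_refl _, hδpos⟩
    obtain ⟨r, hr1, hr2⟩ := (hev1.and (eventually_of_mem hev2 fun _ h => h)).exists
    obtain ⟨hrpos, hrδ⟩ := hr2
    -- extract mass estimate
    have hball : volume (closedBall x₀ r) = ENNReal.ofReal (2 * r) := Real.volume_closedBall x₀ r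
    have hb0 : volume (closedBall x₀ r) ≠ 0 := by
      rw [hball]; simp [ENNReal.ofReal_eq_zero]; linarith
    have hbt : volume (closedBall x₀ r) ≠ ⊤ := by rw [hball]; exact ofReal_ne_top
    have hmass : ENNReal.ofReal (3/2 * r) < volume (K ∩ closedBall x₀ r) := by
      have := (ENNReal.lt_div_iff_mul_lt (Or.inl hb0) (Or.inl hbt)).mp hr1
      have h34 : (3/4 : ℝ≥0∞) = ENNReal.ofReal (3/4) := by
        rw [ENNReal.ofReal_div_of_pos (by norm_num)]
        norm_num
      calc ENNReal.ofReal (3/2 * r) = 3/4 * ENNReal.ofReal (2*r) := by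
            rw [h34, ← ENNReal.ofReal_mul (by norm_num : (0:ℝ) ≤ 3/4)]
            congr 1
            ring
        _ = 3/4 * volume (closedBall x₀ r) := by rw [hball]
        _ < volume (K ∩ closedBall x₀ r) := this
    -- split the ball
    have hsubball : K ∩ closedBall x₀ r ⊆ (K ∩ Ioc x₀ (x₀ + r)) ∪ Icc (x₀ - r) x₀ := by
      intro t ⟨htK, htb⟩
      rw [Real.closedBall_eq_Icc] at htb
      rcases le_or_gt t x₀ with hcase | hcase
      · exact Or.inr ⟨htb.1, hcase⟩
      · exact Or.inl ⟨htK, hcase, htb.2⟩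
    have hmass2 : ENNReal.ofReal (r/2) ≤ volume (K ∩ Ioc x₀ (x₀ + r)) := by
      by_contra hc
      push_neg at hc
      have h1 : volume (K ∩ closedBall x₀ r) ≤
          volume (K ∩ Ioc x₀ (x₀ + r)) + volume (Icc (x₀ - r) x₀) :=
        (measure_mono hsubball).trans (measure_union_le _ _)
      have h2 : volume (Icc (x₀ - r) x₀) = ENNReal.ofReal r := by
        rw [Real.volume_Icc]; congr 1; ring
      rw [h2] at h1
      have h3 : volume (K ∩ Ioc x₀ (x₀ + r)) + ENNReal.ofReal r
          < ENNReal.ofReal (r/2) + ENNReal.ofReal r :=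
        ENNReal.add_lt_add_right ofReal_ne_top hc
      rw [← ENNReal.ofReal_add (by linarith) (by linarith)] at h3
      have h4 : (r/2 + r : ℝ) = 3/2 * r := by ring
      rw [h4] at h3
      exact absurd ((hmass.trans_le h1).trans h3) (lt_irrefl _)
    -- now derive contradiction
    have hFgap : r/2 ≤ F (x₀ + r) - F x₀ := by
      rw [hsplit x₀ (x₀ + r) (by linarith)]
      calc r/2 = (ENNReal.ofReal (r/2)).toReal := (ENNReal.toReal_ofReal (by linarith)).symm
        _ ≤ (volume (K ∩ Ioc x₀ (x₀ + r))).toReal :=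
            ENNReal.toReal_mono ((measure_mono inter_subset_left).trans_lt hKfin.lt_top).ne hmass2
    have hfval : Real.sqrt (r/2) ≤ f (x₀ + r) := by
      rw [hfd]
      exact Real.sqrt_le_sqrt (by linarith)
    have hf0 : f x₀ = 0 := by rw [hfd]; simp
    have hlip := hL.dist_le_mul (x₀ + r) x₀
    rw [Real.dist_eq, Real.dist_eq, hf0, sub_zero, add_sub_cancel_left,
      abs_of_nonneg (le_of_lt hrpos)] at hlip
    have h5 : Real.sqrt (r/2) ≤ ((L:ℝ) + 1) * r := by
      have : |f (x₀ + r)| ≤ (L:ℝ) * r := hlip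
      have h6 : f (x₀ + r) ≤ (L:ℝ) * r := (le_abs_self _).trans this
      nlinarith [hrpos]
    have h7 : r/2 ≤ (((L:ℝ) + 1) * r)^2 := by
      have := Real.sq_sqrt (by linarith : (0:ℝ) ≤ r/2)
      nlinarith [Real.sqrt_nonneg (r/2)]
    rw [hδdef] at hrδ
    have hpos2 : (0:ℝ) < 2*((L:ℝ)+1)^2 := by positivity
    have hkey : 2*((L:ℝ)+1)^2 * r < 1 := by
      calc 2*((L:ℝ)+1)^2 * r < 2*((L:ℝ)+1)^2 * (1/(2*((L:ℝ)+1)^2)) :=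
            mul_lt_mul_of_pos_left hrδ hpos2
        _ = 1 := by field_simp
    nlinarith [h7, hrpos, hkey]

end Aux

/-- If `Θ ⊆ ℝ` has uncountable closure, there is a continuous function which is constant on
every connected component of the complement of the closure of `Θ` but not Lipschitz. -/
theorem stmt11 (Θ : Set ℝ) (h : ¬ (closure Θ).Countable) :
    ∃ f : ℝ → ℝ, Continuous f ∧
      (∀ x ∈ (closure Θ)ᶜ, ∀ y ∈ connectedComponentIn (closure Θ)ᶜ x, f y = f x) ∧
      ¬ ∃ L : NNReal, LipschitzWith L f := by
  by_cases hvol : volume (closure Θ) = 0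
  · obtain ⟨f, hc, hconst, hnl⟩ := aux_caseB isClosed_closure h hvol
    exact ⟨f, hc, aux_const_on_components hconst, hnl⟩
  · obtain ⟨f, hc, hconst, hnl⟩ := aux_caseA isClosed_closure hvol
    exact ⟨f, hc, aux_const_on_components hconst, hnl⟩
end

section
/- Let M = [0,1]² with the euclidean metric and Θ = ([0,1] \ ℚ)². Then Θ is not permeable: specifically, there exists ε > 0 such that every path γ in M from (0,0) to (1,1) with length ℓ(γ) < √2 + ε intersects Θ in uncountably many points. -/
open Set MeasureTheory ENNReal
open Filter Topology
open scoped NNReal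

/-- Isolated points (in `C`) of a set `C ⊆ ℝ` form a countable set. -/
lemma countable_isolated (C : Set ℝ) : {x | x ∈ C ∧ ¬ AccPt x (Filter.principal C)}.Countable := by
  have : {x | x ∈ C ∧ ¬ AccPt x (Filter.principal C)} ⊆
      ⋃ r : ℚ × ℚ, {x | x ∈ C ∧ x ∈ Ioo (r.1 : ℝ) (r.2 : ℝ) ∧ Ioo (r.1 : ℝ) (r.2 : ℝ) ∩ C ⊆ {x}} := by
    rintro x ⟨hxC, hx⟩
    rw [accPt_iff_nhds] at hx
    push_neg at hx
    obtain ⟨U, hU, hU'⟩ := hx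
    obtain ⟨l, u, hlu, hsub⟩ := mem_nhds_iff_exists_Ioo_subset.1 hU
    obtain ⟨q1, hq1, hq1'⟩ := exists_rat_btwn hlu.1
    obtain ⟨q2, hq2, hq2'⟩ := exists_rat_btwn hlu.2
    refine mem_iUnion.2 ⟨(q1, q2), ⟨hxC, ⟨hq1', hq2⟩, ?_⟩⟩
    rintro y ⟨hy, hyC⟩
    have : y ∈ U := hsub ⟨hq1.trans hy.1, hy.2.trans hq2'⟩
    exact hU' y ⟨this, hyC⟩
  refine Set.Countable.mono this ?_
  refine Set.countable_iUnion fun r => ?_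
  refine Set.Subsingleton.countable ?_
  rintro x ⟨hxC, hx, hx'⟩ y ⟨hyC, hy, hy'⟩
  exact hy' ⟨hx, hxC⟩

lemma deriv_zero_of_accPt {f : ℝ → ℝ} {c t : ℝ} (hd : HasDerivAt f c t) {V : Set ℝ}
    (hV : ∀ x ∈ V, f x = f t) (ht : AccPt t (Filter.principal V)) : c = 0 := by
  rw [hasDerivAt_iff_tendsto_slope] at hd
  have hne : (𝓝[V \ {t}] t).NeBot := by
    rw [accPt_iff_nhds] at ht
    rw [nhdsWithin, Filter.inf_principal_neBot_iff]
    intro U hU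
    obtain ⟨y, hy, hy'⟩ := ht U hU
    exact ⟨y, hy.1, hy.2, hy'⟩
  have h1 : Filter.Tendsto (slope f t) (𝓝[V \ {t}] t) (𝓝 c) :=
    hd.mono_left (nhdsWithin_mono t (by intro x hx; exact hx.2))
  have h2 : Filter.Tendsto (slope f t) (𝓝[V \ {t}] t) (𝓝 0) := by
    have : ∀ x ∈ V \ {t}, slope f t x = 0 := by
      intro x hx
      simp [slope, hV x hx.1, vsub_eq_sub]
    refine Filter.Tendsto.congr' ?_ tendsto_const_nhds
    filter_upwards [self_mem_nhdsWithin] with x hx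
    exact (this x hx).symm
  exact tendsto_nhds_unique h1 h2

/-- a.e., at points where `φ` takes values in the countable set `D`, the Stieltjes density of
`t - φ t` equals 1. -/
lemma ae_rnDeriv_eq_one {φ : ℝ → ℝ} (hφ : LipschitzWith 1 φ) {D : Set ℝ} (hD : D.Countable) :
    ∀ F : StieltjesFunction ℝ, (⇑F = fun t => t - φ t) →
    ∀ᵐ x, x ∈ φ ⁻¹' D → F.measure.rnDeriv volume x = 1 := by
  intro F hF
  have hBad : (⋃ c ∈ D, {x | x ∈ φ ⁻¹' {c} ∧ ¬ AccPt x (Filter.principal (φ ⁻¹' {c}))}).Countable :=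
    hD.biUnion fun c _ => countable_isolated _
  have hBad0 : ∀ᵐ x, x ∉ ⋃ c ∈ D, {x | x ∈ φ ⁻¹' {c} ∧ ¬ AccPt x (Filter.principal (φ ⁻¹' {c}))} :=
    hBad.ae_notMem _
  filter_upwards [F.ae_hasDerivAt, Measure.rnDeriv_lt_top F.measure volume, hBad0]
    with x hx1 hx2 hx3 hxD
  rw [hF] at hx1
  have hacc : AccPt x (Filter.principal (φ ⁻¹' {φ x})) := by
    by_contra hcon
    exact hx3 (Set.mem_biUnion hxD ⟨rfl, hcon⟩)
  have hder : HasDerivAt φ (1 - (F.measure.rnDeriv volume x).toReal) x := by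
    have := (hasDerivAt_id' x).sub hx1
    exact this.congr_of_eventuallyEq (Filter.Eventually.of_forall fun y => by
      show φ y = y - (y - φ y); ring)
  have := deriv_zero_of_accPt hder (fun y hy => hy) hacc
  have htr : (F.measure.rnDeriv volume x).toReal = 1 := by linarith
  have := hx2.ne
  exact (ENNReal.toReal_eq_one_iff _).1 htr

lemma key_lemma {φ ψ : ℝ → ℝ} (hφ : LipschitzWith 1 φ) (hψ : LipschitzWith 1 ψ)
    {L : ℝ} (hL0 : 0 ≤ L) {D E : Set ℝ} (hD : D.Countable) (hE : E.Countable)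
    (cover : ∀ t, φ t ∈ D ∨ ψ t ∈ E)
    (hφ0 : φ 0 = 0) (hφL : φ L = 1) (hψ0 : ψ 0 = 0) (hψL : ψ L = 1) :
    2 ≤ L := by
  -- first, 1 ≤ L
  have hL1 : 1 ≤ L := by
    have h := hφ.dist_le_mul L 0
    rw [Real.dist_eq, Real.dist_eq, hφL, hφ0] at h
    simp only [NNReal.coe_one, one_mul, sub_zero] at h
    have : |(1:ℝ)| ≤ |L| := h
    rw [abs_one, abs_of_nonneg hL0] at this
    exact this
  -- Stieltjes functions
  have monokey : ∀ (χ : ℝ → ℝ), LipschitzWith 1 χ → Monotone (fun t => t - χ t) := by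
    intro χ hχ s t hst
    have h := hχ.dist_le_mul t s
    rw [Real.dist_eq, Real.dist_eq, abs_of_nonneg (sub_nonneg.2 hst)] at h
    simp only [NNReal.coe_one, one_mul] at h
    show s - χ s ≤ t - χ t
    have := le_abs_self (χ t - χ s)
    linarith
  have monoφ := monokey φ hφ
  have monoψ := monokey ψ hψ
  set Fφ : StieltjesFunction ℝ :=
    ⟨fun t => t - φ t, monoφ, fun x => ((continuous_id.sub hφ.continuous).continuousWithinAt)⟩
    with hFφ
  set Fψ : StieltjesFunction ℝ :=
    ⟨fun t => t - ψ t, monoψ, fun x => ((continuous_id.sub hψ.continuous).continuousWithinAt)⟩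
    with hFψ
  set B : Set ℝ := ψ ⁻¹' E with hB
  have hBmeas : MeasurableSet B := (hE.measurableSet).preimage hψ.continuous.measurable
  have hA : ∀ x, x ∉ B → x ∈ φ ⁻¹' D := fun x hx => (cover x).resolve_right hx
  -- part 1 : volume (Ioc 0 L \ B) ≤ ofReal (L - 1)
  have part1 : volume (Ioc 0 L \ B) ≤ ENNReal.ofReal (L - 1) := by
    have hmeas : MeasurableSet (Ioc 0 L \ B) := measurableSet_Ioc.diff hBmeas
    have hae : ∀ᵐ x ∂(volume.restrict (Ioc 0 L \ B)),
        Fφ.measure.rnDeriv volume x = 1 := by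
      have h1 := ae_rnDeriv_eq_one hφ hD Fφ rfl
      filter_upwards [ae_restrict_of_ae h1, ae_restrict_mem hmeas] with x h1x hmem
      exact h1x (hA x hmem.2)
    calc volume (Ioc 0 L \ B) = ∫⁻ x in Ioc 0 L \ B, 1 := by
          rw [setLIntegral_one]
      _ = ∫⁻ x in Ioc 0 L \ B, Fφ.measure.rnDeriv volume x := (lintegral_congr_ae hae).symm
      _ ≤ Fφ.measure (Ioc 0 L \ B) := Measure.setLIntegral_rnDeriv_le _
      _ ≤ Fφ.measure (Ioc 0 L) := measure_mono diff_subset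
      _ = ENNReal.ofReal (L - 1) := by
          rw [StieltjesFunction.measure_Ioc]
          congr 1
          show (L - φ L) - (0 - φ 0) = L - 1
          rw [hφL, hφ0]; ring
  -- part 2 : volume (Ioc 0 L ∩ B) ≤ ofReal (L - 1)
  have part2 : volume (Ioc 0 L ∩ B) ≤ ENNReal.ofReal (L - 1) := by
    have hmeas : MeasurableSet (Ioc 0 L ∩ B) := measurableSet_Ioc.inter hBmeas
    have hae : ∀ᵐ x ∂(volume.restrict (Ioc 0 L ∩ B)),
        Fψ.measure.rnDeriv volume x = 1 := by
      have h1 := ae_rnDeriv_eq_one hψ hE Fψ rfl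
      filter_upwards [ae_restrict_of_ae h1, ae_restrict_mem hmeas] with x h1x hmem
      exact h1x hmem.2
    calc volume (Ioc 0 L ∩ B) = ∫⁻ x in Ioc 0 L ∩ B, 1 := by
          rw [setLIntegral_one]
      _ = ∫⁻ x in Ioc 0 L ∩ B, Fψ.measure.rnDeriv volume x := (lintegral_congr_ae hae).symm
      _ ≤ Fψ.measure (Ioc 0 L ∩ B) := Measure.setLIntegral_rnDeriv_le _
      _ ≤ Fψ.measure (Ioc 0 L) := measure_mono inter_subset_left
      _ = ENNReal.ofReal (L - 1) := by
          rw [StieltjesFunction.measure_Ioc]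
          congr 1
          show (L - ψ L) - (0 - ψ 0) = L - 1
          rw [hψL, hψ0]; ring
  -- combine
  have hsplit : volume (Ioc (0:ℝ) L) = volume (Ioc 0 L ∩ B) + volume (Ioc 0 L \ B) :=
    (measure_inter_add_diff _ hBmeas).symm
  have hvol : volume (Ioc (0:ℝ) L) ≤ ENNReal.ofReal (L - 1) + ENNReal.ofReal (L - 1) := by
    rw [hsplit]; exact add_le_add part2 part1
  rw [Real.volume_Ioc, sub_zero] at hvol
  have this := hvol
  rw [← ENNReal.ofReal_add (by linarith) (by linarith)] at this
  have := (ENNReal.ofReal_le_ofReal_iff (by linarith)).1 this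
  linarith





lemma evar_right_small {X : Type*} [PseudoEMetricSpace X] {f : ℝ → X} {t b : ℝ} (htb : t ≤ b)
    (hf : ContinuousWithinAt f (Icc t b) t) (hfin : eVariationOn f (Icc t b) ≠ ⊤) :
    ∀ ε : ℝ≥0∞, 0 < ε →
      ∃ δ > (0:ℝ), ∀ x, t ≤ x → x ≤ b → x - t < δ → eVariationOn f (Icc t x) ≤ ε := by
  intro ε hε
  set V := eVariationOn f (Icc t b) with hV
  by_cases hVsmall : V ≤ ε / 2
  · refine ⟨1, one_pos, fun x hx hxb _ => ?_⟩
    exact le_trans (le_trans (eVariationOn.mono f (Icc_subset_Icc le_rfl hxb)) hVsmall)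
      (ENNReal.half_le_self)
  push_neg at hVsmall
  have hεtop : ε ≠ ⊤ := by
    intro h
    rw [h, ENNReal.top_div_of_ne_top ENNReal.ofNat_ne_top] at hVsmall
    exact not_top_lt hVsmall
  have hhalf : 0 < ε / 2 := ENNReal.div_pos hε.ne' ENNReal.ofNat_ne_top
  have hsub : V - ε / 2 < V :=
    ENNReal.sub_lt_self hfin (hhalf.trans hVsmall).ne' hhalf.ne'
  rw [hV, eVariationOn, lt_iSup_iff] at hsub
  obtain ⟨⟨n, u, hu, us⟩, hsum⟩ := hsub
  -- the candidate times strictly above t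
  set T : Finset ℕ := (Finset.range (n + 1)).filter (fun i => t < u i) with hT
  by_cases hTne : T.Nonempty
  swap
  · -- all points equal t, so the sum is 0, contradiction with hsum unless V - ε/2 < 0
    exfalso
    have : ∀ i < n + 1, u i = t := by
      intro i hi
      have : ¬ t < u i := by
        intro h
        exact hTne ⟨i, Finset.mem_filter.2 ⟨Finset.mem_range.2 hi, h⟩⟩
      exact le_antisymm (not_lt.1 this) (us i).1
    have hz : ∑ i ∈ Finset.range n, edist (f (u (i + 1))) (f (u i)) = 0 := by
      refine Finset.sum_eq_zero fun i hi => ?_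
      rw [Finset.mem_range] at hi
      rw [this (i+1) (by omega), this i (by omega)]
      simp
    rw [hz] at hsum
    exact (not_lt.2 zero_le) hsum
  set t1 : ℝ := T.inf' hTne u with ht1
  have ht1mem : ∃ i ∈ T, u i = t1 := by
    obtain ⟨i, hi, hiu⟩ := T.exists_mem_eq_inf' hTne u
    exact ⟨i, hi, hiu.symm⟩
  have ht1pos : t < t1 := by
    obtain ⟨i, hi, hiu⟩ := ht1mem
    rw [← hiu]
    exact (Finset.mem_filter.1 hi).2
  have ht1le : ∀ i ≤ n, t < u i → t1 ≤ u i := by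
    intro i hi hti
    exact Finset.inf'_le u (Finset.mem_filter.2 ⟨Finset.mem_range.2 (by omega), hti⟩)
  -- continuity control
  set η : ℝ≥0∞ := ε / 2 / (2 * (n + 1)) with hη
  have hηpos : 0 < η := by
    apply ENNReal.div_pos hhalf.ne' (by simp [ENNReal.mul_eq_top])
  have hcont : ∀ᶠ x in 𝓝[Icc t b] t, edist (f x) (f t) < η := by
    have := hf.tendsto
    rw [EMetric.tendsto_nhds] at this
    exact this η hηpos
  rw [eventually_nhdsWithin_iff, Metric.eventually_nhds_iff] at hcont
  obtain ⟨δc, hδc, hcont⟩ := hcont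
  refine ⟨min δc (t1 - t), by simp [hδc, ht1pos], fun x hx hxb hxδ => ?_⟩
  have hxδc : x - t < δc := lt_of_lt_of_le hxδ (min_le_left _ _)
  have hxt1 : x < t1 := by
    have := lt_of_lt_of_le hxδ (min_le_right _ _)
    linarith
  have he : edist (f x) (f t) < η := by
    refine hcont ?_ ⟨hx, hxb⟩
    rw [Real.dist_eq, abs_of_nonneg (by linarith)]
    exact hxδc
  set e : ℝ≥0∞ := edist (f x) (f t) with helt
  -- modified partition
  set w : ℕ → ℝ := fun i => max (u i) x with hw
  have hwmono : Monotone w := fun i j hij => max_le_max (hu hij) le_rfl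
  have hwmem : ∀ i, w i ∈ Icc x b := fun i => ⟨le_max_right _ _, max_le (us i).2 hxb⟩
  have hwu : ∀ i ≤ n, edist (f (w i)) (f (u i)) ≤ e := by
    intro i hi
    rcases lt_or_ge t (u i) with h | h
    · have : w i = u i := max_eq_left (le_trans hxt1.le (ht1le i hi h))
      rw [this]
      simp
    · have hut : u i = t := le_antisymm h (us i).1
      have : w i = x := by rw [hw]; simp only [hut]; exact max_eq_right hx
      rw [this, hut]
  -- sum comparison
  have hsum2 : ∑ i ∈ Finset.range n, edist (f (u (i + 1))) (f (u i)) ≤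
      (∑ i ∈ Finset.range n, edist (f (w (i + 1))) (f (w i))) + (n : ℝ≥0∞) * (2 * e) := by
    calc ∑ i ∈ Finset.range n, edist (f (u (i + 1))) (f (u i))
        ≤ ∑ i ∈ Finset.range n,
          (edist (f (u (i+1))) (f (w (i+1))) + edist (f (w (i+1))) (f (w i))
            + edist (f (w i)) (f (u i))) := by
          refine Finset.sum_le_sum fun i _ => ?_
          exact edist_triangle4 _ _ _ _
      _ ≤ ∑ i ∈ Finset.range n, (edist (f (w (i+1))) (f (w i)) + 2 * e) := by
          refine Finset.sum_le_sum fun i hi => ?_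
          rw [Finset.mem_range] at hi
          have h1 : edist (f (u (i+1))) (f (w (i+1))) ≤ e := by
            rw [edist_comm]; exact hwu (i+1) (by omega)
          have h2 : edist (f (w i)) (f (u i)) ≤ e := hwu i (by omega)
          calc edist (f (u (i+1))) (f (w (i+1))) + edist (f (w (i+1))) (f (w i))
              + edist (f (w i)) (f (u i))
              ≤ e + edist (f (w (i+1))) (f (w i)) + e := by
                exact add_le_add (add_le_add h1 le_rfl) h2
            _ = edist (f (w (i+1))) (f (w i)) + 2 * e := by ring
      _ = (∑ i ∈ Finset.range n, edist (f (w (i+1))) (f (w i))) + (n : ℝ≥0∞) * (2 * e) := by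
          rw [Finset.sum_add_distrib, Finset.sum_const, Finset.card_range, nsmul_eq_mul]
  have hsumw : ∑ i ∈ Finset.range n, edist (f (w (i + 1))) (f (w i)) ≤
      eVariationOn f (Icc x b) :=
    eVariationOn.sum_le (f := f) (n := n) hwmono hwmem
  -- additivity
  have hadd : eVariationOn f (Icc t x) + eVariationOn f (Icc x b) = V := by
    have := eVariationOn.Icc_add_Icc f (s := univ) hx hxb (mem_univ x)
    simpa using this
  -- conclude
  have hVle : V ≤ eVariationOn f (Icc x b) + ((n : ℝ≥0∞) * (2 * e) + ε / 2) := by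
    have h1 : V ≤ (∑ i ∈ Finset.range n, edist (f (u (i + 1))) (f (u i))) + ε / 2 :=
      tsub_le_iff_right.1 hsum.le
    calc V ≤ (∑ i ∈ Finset.range n, edist (f (u (i + 1))) (f (u i))) + ε / 2 := h1
      _ ≤ ((∑ i ∈ Finset.range n, edist (f (w (i + 1))) (f (w i))) + (n : ℝ≥0∞) * (2 * e)) + ε / 2 :=
          add_le_add hsum2 le_rfl
      _ ≤ (eVariationOn f (Icc x b) + (n : ℝ≥0∞) * (2 * e)) + ε / 2 :=
          add_le_add (add_le_add hsumw le_rfl) le_rfl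
      _ = eVariationOn f (Icc x b) + ((n : ℝ≥0∞) * (2 * e) + ε / 2) := by ring
  have hcancel : eVariationOn f (Icc t x) ≤ (n : ℝ≥0∞) * (2 * e) + ε / 2 := by
    have hfin2 : eVariationOn f (Icc x b) ≠ ⊤ := by
      intro h
      rw [← hadd, h] at hfin
      simp at hfin
    rw [← hadd, add_comm (eVariationOn f (Icc x b))] at hVle
    exact (ENNReal.add_le_add_iff_right hfin2).1 hVle
  refine hcancel.trans ?_
  have : (n : ℝ≥0∞) * (2 * e) ≤ ε / 2 := by
    calc (n : ℝ≥0∞) * (2 * e) = (2 * n) * e := by ring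
      _ ≤ (2 * (n + 1)) * η := by
          refine mul_le_mul ?_ he.le zero_le zero_le
          have : (n : ℝ≥0∞) ≤ (n : ℝ≥0∞) + 1 := le_self_add
          exact mul_le_mul le_rfl this zero_le zero_le
      _ = ε / 2 := by
          rw [hη]
          exact ENNReal.mul_div_cancel' (by simp) (by simp [ENNReal.mul_eq_top])
  calc (n : ℝ≥0∞) * (2 * e) + ε / 2 ≤ ε / 2 + ε / 2 := add_le_add this le_rfl
    _ = ε := ENNReal.add_halves ε

lemma evar_left_small {X : Type*} [PseudoEMetricSpace X] {f : ℝ → X} {a t : ℝ} (hat : a ≤ t)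
    (hf : ContinuousWithinAt f (Icc a t) t) (hfin : eVariationOn f (Icc a t) ≠ ⊤) :
    ∀ ε : ℝ≥0∞, 0 < ε →
      ∃ δ > (0:ℝ), ∀ x, a ≤ x → x ≤ t → t - x < δ → eVariationOn f (Icc x t) ≤ ε := by
  intro ε hε
  set g : ℝ → X := f ∘ (fun y => -y) with hg
  have himg : ∀ u v : ℝ, (fun y : ℝ => -y) '' Icc u v = Icc (-v) (-u) := by
    intro u v
    ext y
    constructor
    · rintro ⟨z, hz, rfl⟩
      obtain ⟨hz1, hz2⟩ := hz
      exact ⟨by dsimp; linarith, by dsimp; linarith⟩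
    · intro hy
      obtain ⟨hy1, hy2⟩ := hy
      exact ⟨-y, ⟨by linarith, by linarith⟩, by dsimp; ring⟩
  have hanti : ∀ u v : ℝ, AntitoneOn (fun y : ℝ => -y) (Icc u v) := by
    intro u v x _ y _ hxy
    dsimp
    linarith
  have hcomp : ∀ u v : ℝ, eVariationOn g (Icc u v) = eVariationOn f (Icc (-v) (-u)) := by
    intro u v
    rw [hg, eVariationOn.comp_eq_of_antitoneOn f _ (hanti u v), himg]
  have hgc : ContinuousWithinAt g (Icc (-t) (-a)) (-t) := by
    have hmaps : MapsTo (fun y : ℝ => -y) (Icc (-t) (-a)) (Icc a t) := by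
      intro y hy
      obtain ⟨hy1, hy2⟩ := hy
      exact ⟨by dsimp; linarith, by dsimp; linarith⟩
    have : ContinuousWithinAt (fun y : ℝ => -y) (Icc (-t) (-a)) (-t) :=
      continuous_neg.continuousWithinAt
    have := ContinuousWithinAt.comp (x := -t) (by rw [neg_neg]; exact hf) this hmaps
    exact this
  have hgfin : eVariationOn g (Icc (-t) (-a)) ≠ ⊤ := by
    rw [hcomp]
    simpa using hfin
  obtain ⟨δ, hδ, hδ'⟩ := evar_right_small (by linarith : -t ≤ -a) hgc hgfin ε hε
  refine ⟨δ, hδ, fun x hax hxt hxδ => ?_⟩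
  have := hδ' (-x) (by linarith) (by linarith) (by linarith)
  rw [hcomp] at this
  simpa using this

lemma exists_reparam {X : Type*} [MetricSpace X] {f : ℝ → X} {a b : ℝ} (hab : a ≤ b)
    (hf : ContinuousOn f (Icc a b)) (hfin : eVariationOn f (Icc a b) ≠ ⊤) :
    ∃ (Γ : ℝ → X) (L : ℝ), 0 ≤ L ∧ ENNReal.ofReal L = eVariationOn f (Icc a b) ∧
      LipschitzOnWith 1 Γ (Icc 0 L) ∧ Γ '' (Icc 0 L) = f '' (Icc a b) ∧ Γ 0 = f a ∧ Γ L = f b := by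
  set s := Icc a b with hs
  have has : a ∈ s := ⟨le_rfl, hab⟩
  have hbs : b ∈ s := ⟨hab, le_rfl⟩
  have hloc : LocallyBoundedVariationOn f s := fun x y _ _ =>
    ((eVariationOn.mono f inter_subset_left).trans_lt (lt_top_iff_ne_top.2 hfin)).ne
  set ρ := variationOnFromTo f s a with hρdef
  set L : ℝ := ρ b with hL
  have hρa : ρ a = 0 := variationOnFromTo.self f s a
  have hρmono : MonotoneOn ρ s := variationOnFromTo.monotoneOn hloc has
  have hρL : ENNReal.ofReal L = eVariationOn f s := by
    rw [hL, hρdef, variationOnFromTo.eq_of_le f s hab, hs, Set.inter_self,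
      ENNReal.ofReal_toReal hfin]
  have hL0 : 0 ≤ L := by
    rw [← hρa]
    exact hρmono has hbs hab
  -- continuity of ρ on s
  have hρcont : ContinuousOn ρ s := by
    intro t hts
    rw [Metric.continuousWithinAt_iff]
    intro ε hε
    have hhalf : (0:ℝ≥0∞) < ENNReal.ofReal (ε/2) := by
      rw [ENNReal.ofReal_pos]; linarith
    obtain ⟨δ1, hδ1, hδ1'⟩ := evar_right_small (t := t) (b := b) hts.2
      (hf.mono (Icc_subset_Icc hts.1 le_rfl) |>.continuousWithinAt ⟨le_rfl, hts.2⟩)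
      (fun h => hfin (top_le_iff.1 (h ▸ eVariationOn.mono f (Icc_subset_Icc hts.1 le_rfl)))
        |>.elim)
      (ENNReal.ofReal (ε/2)) hhalf
    obtain ⟨δ2, hδ2, hδ2'⟩ := evar_left_small (a := a) (t := t) hts.1
      (hf.mono (Icc_subset_Icc le_rfl hts.2) |>.continuousWithinAt ⟨hts.1, le_rfl⟩)
      (fun h => hfin (top_le_iff.1 (h ▸ eVariationOn.mono f (Icc_subset_Icc le_rfl hts.2)))
        |>.elim)
      (ENNReal.ofReal (ε/2)) hhalf
    refine ⟨min δ1 δ2, by simp [hδ1, hδ2], fun x hxs hxd => ?_⟩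
    rw [Real.dist_eq] at hxd
    rcases le_total t x with htx | hxt
    · -- right side
      have hvar : ρ x - ρ t = (eVariationOn f (Icc t x)).toReal := by
        have hadd := variationOnFromTo.add hloc has hts hxs
        have heq : variationOnFromTo f s t x = (eVariationOn f (s ∩ Icc t x)).toReal :=
          variationOnFromTo.eq_of_le f s htx
        rw [Set.inter_eq_self_of_subset_right (Icc_subset_Icc hts.1 hxs.2)] at heq
        rw [heq] at hadd
        have : ρ t + (eVariationOn f (Icc t x)).toReal = ρ x := hadd
        linarith
      have hbound := hδ1' x htx hxs.2
        (by rw [abs_of_nonneg (by linarith)] at hxd; linarith [min_le_left δ1 δ2])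
      have : ρ x - ρ t ≤ ε / 2 := by
        rw [hvar]
        exact ENNReal.toReal_le_of_le_ofReal (by linarith) hbound
      have hnn : 0 ≤ ρ x - ρ t := by
        have := hρmono hts hxs htx
        linarith
      rw [Real.dist_eq, abs_of_nonneg (by linarith)]
      linarith
    · -- left side
      have hvar : ρ t - ρ x = (eVariationOn f (Icc x t)).toReal := by
        have hadd := variationOnFromTo.add hloc has hxs hts
        have heq : variationOnFromTo f s x t = (eVariationOn f (s ∩ Icc x t)).toReal :=
          variationOnFromTo.eq_of_le f s hxt
        rw [Set.inter_eq_self_of_subset_right (Icc_subset_Icc hxs.1 hts.2)] at heq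
        rw [heq] at hadd
        have : ρ x + (eVariationOn f (Icc x t)).toReal = ρ t := hadd
        linarith
      have hbound := hδ2' x hxs.1 hxt
        (by rw [abs_of_nonpos (by linarith)] at hxd; linarith [min_le_right δ1 δ2])
      have : ρ t - ρ x ≤ ε / 2 := by
        rw [hvar]
        exact ENNReal.toReal_le_of_le_ofReal (by linarith) hbound
      have hnn : 0 ≤ ρ t - ρ x := by
        have := hρmono hxs hts hxt
        linarith
      rw [Real.dist_eq, abs_of_nonpos (by linarith)]
      linarith
  -- image of ρ is Icc 0 L
  have hT : ρ '' s = Icc 0 L := by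
    apply Subset.antisymm
    · rintro _ ⟨t, hts, rfl⟩
      exact ⟨hρa ▸ hρmono has hts hts.1, hρmono hts hbs hts.2⟩
    · have := intermediate_value_Icc hab hρcont
      rw [hρa] at this
      exact this
  set Γ := naturalParameterization f s a with hΓ
  refine ⟨Γ, L, hL0, hρL, ?_, ?_, ?_, ?_⟩
  · -- Lipschitz
    have hus := has_unit_speed_naturalParameterization f hloc has
    rw [show variationOnFromTo f s a '' s = ρ '' s from rfl, hT] at hus
    intro x hx y hy
    rcases le_total x y with hxy | hyx
    · have h1 : edist (Γ x) (Γ y) ≤ eVariationOn Γ (Icc 0 L ∩ Icc x y) :=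
        eVariationOn.edist_le Γ ⟨hx, ⟨le_rfl, hxy⟩⟩ ⟨hy, ⟨hxy, le_rfl⟩⟩
      rw [hus hx hy] at h1
      simp only [NNReal.coe_one, one_mul] at h1
      have h2 : ENNReal.ofReal (y - x) ≤ edist x y := by
        rw [edist_dist, Real.dist_eq]
        exact ENNReal.ofReal_le_ofReal (by rw [abs_sub_comm]; exact le_abs_self _)
      simpa using h1.trans h2
    · have h1 : edist (Γ y) (Γ x) ≤ eVariationOn Γ (Icc 0 L ∩ Icc y x) :=
        eVariationOn.edist_le Γ ⟨hy, ⟨le_rfl, hyx⟩⟩ ⟨hx, ⟨hyx, le_rfl⟩⟩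
      rw [hus hy hx] at h1
      rw [edist_comm] at h1
      simp only [NNReal.coe_one, one_mul] at h1
      have h2 : ENNReal.ofReal (x - y) ≤ edist x y := by
        rw [edist_dist, Real.dist_eq]
        exact ENNReal.ofReal_le_ofReal (le_abs_self _)
      simpa using h1.trans h2
  · -- image
    have hΓρ : ∀ t ∈ s, Γ (ρ t) = f t := by
      intro t hts
      have := edist_naturalParameterization_eq_zero hloc has hts
      rwa [edist_eq_zero] at this
    rw [← hT, Set.image_image]
    exact Set.image_congr hΓρ
  · have := edist_naturalParameterization_eq_zero hloc has has
    rw [edist_eq_zero] at this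
    rwa [show variationOnFromTo f s a a = ρ a from rfl, hρa] at this
  · have := edist_naturalParameterization_eq_zero hloc has hbs
    rw [edist_eq_zero] at this
    rwa [show variationOnFromTo f s a b = ρ b from rfl, ← hL] at this

-- coordinate of Euclidean space is 1-Lipschitz-ish
lemma coord_abs_le_dist (x y : EuclideanSpace ℝ (Fin 2)) (i : Fin 2) :
    |x i - y i| ≤ dist x y := by
  rw [EuclideanSpace.dist_eq]
  have h1 : |x i - y i| = Real.sqrt (dist (x i) (y i) ^ 2) := by
    rw [Real.sqrt_sq_eq_abs, Real.dist_eq, abs_abs]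
  rw [h1]
  apply Real.sqrt_le_sqrt
  refine Finset.single_le_sum (f := fun j => dist (x j) (y j) ^ 2) ?_ (Finset.mem_univ i)
  intro j _
  positivity

lemma clamp_lipschitz {L : ℝ} : LipschitzWith 1 (fun t : ℝ => max 0 (min t L)) := by
  rw [lipschitzWith_iff_dist_le_mul]
  intro s t
  rw [NNReal.coe_one, one_mul, Real.dist_eq, Real.dist_eq]
  rw [max_comm 0 (min s L), max_comm 0 (min t L)]
  refine (abs_max_sub_max_le_abs _ _ _).trans ?_
  refine (abs_min_sub_min_le_max _ _ _ _).trans ?_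
  simp

/-- Core geometric lemma: a path in the unit square joining `(0,0)` to `(1,1)` that meets
`Θ` in only countably many points has length at least 2. -/
lemma main_path
    (Msq : Set (EuclideanSpace ℝ (Fin 2)))
    (hM : Msq = {p | p 0 ∈ Set.Icc (0 : ℝ) 1 ∧ p 1 ∈ Set.Icc (0 : ℝ) 1})
    (Θ : Set (EuclideanSpace ℝ (Fin 2)))
    (hΘ : Θ = {p | p 0 ∈ Set.Icc (0 : ℝ) 1 \ Set.range ((↑) : ℚ → ℝ) ∧
                   p 1 ∈ Set.Icc (0 : ℝ) 1 \ Set.range ((↑) : ℚ → ℝ)})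
    (p q : EuclideanSpace ℝ (Fin 2)) (hp : p = WithLp.toLp 2 ![0, 0]) (hq : q = WithLp.toLp 2 ![1, 1])
    (γ : ℝ → EuclideanSpace ℝ (Fin 2)) (a b : ℝ)
    (hpath : IsPathIn Msq γ a b p q)
    (hcount : (γ '' Set.Icc a b ∩ Θ).Countable) :
    ENNReal.ofReal 2 ≤ pathLength γ a b := by
  obtain ⟨hab, hcont, hγa, hγb, hmem⟩ := hpath
  by_contra hlen
  push_neg at hlen
  have hfin : eVariationOn γ (Icc a b) ≠ ⊤ := hlen.ne_top
  obtain ⟨Γ, L, hL0, hLvar, hLip, himg, hΓ0, hΓL⟩ := exists_reparam hab hcont hfin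
  have hL2 : L < 2 := by
    have : ENNReal.ofReal L < ENNReal.ofReal 2 := by rw [hLvar]; exact hlen
    exact (ENNReal.ofReal_lt_ofReal_iff (by norm_num)).1 this
  -- clamped reparametrized path, globally 1-Lipschitz
  set clamp : ℝ → ℝ := fun t => max 0 (min t L) with hclamp
  have hclampmem : ∀ t, clamp t ∈ Icc 0 L := fun t =>
    ⟨le_max_left _ _, max_le hL0 (min_le_right _ _)⟩
  have hclamp0 : clamp 0 = 0 := by simp [hclamp, hL0]
  have hclampL : clamp L = L := by simp [hclamp, hL0]
  set Γ' : ℝ → EuclideanSpace ℝ (Fin 2) := fun t => Γ (clamp t) with hΓ'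
  have hΓ'lip : LipschitzWith 1 Γ' := by
    intro s t
    calc edist (Γ' s) (Γ' t) ≤ 1 * edist (clamp s) (clamp t) :=
          hLip (hclampmem s) (hclampmem t)
      _ ≤ edist s t := by
          rw [one_mul]
          simpa using clamp_lipschitz s t
      _ = 1 * edist s t := (one_mul _).symm
  have hΓ'img : ∀ t, Γ' t ∈ γ '' Icc a b := by
    intro t
    rw [← himg]
    exact ⟨clamp t, hclampmem t, rfl⟩
  set φ : ℝ → ℝ := fun t => Γ' t 0 with hφdef
  set ψ : ℝ → ℝ := fun t => Γ' t 1 with hψdef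
  have hφlip : LipschitzWith 1 φ := by
    rw [lipschitzWith_iff_dist_le_mul]
    intro s t
    rw [NNReal.coe_one, one_mul, Real.dist_eq]
    refine (coord_abs_le_dist _ _ 0).trans ?_
    have := hΓ'lip.dist_le_mul s t
    rwa [NNReal.coe_one, one_mul] at this
  have hψlip : LipschitzWith 1 ψ := by
    rw [lipschitzWith_iff_dist_le_mul]
    intro s t
    rw [NNReal.coe_one, one_mul, Real.dist_eq]
    refine (coord_abs_le_dist _ _ 1).trans ?_
    have := hΓ'lip.dist_le_mul s t
    rwa [NNReal.coe_one, one_mul] at this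
  have hφ0 : φ 0 = 0 := by
    show Γ (clamp 0) 0 = 0
    rw [hclamp0, hΓ0, hγa, hp]
    rfl
  have hψ0 : ψ 0 = 0 := by
    show Γ (clamp 0) 1 = 0
    rw [hclamp0, hΓ0, hγa, hp]
    rfl
  have hφL : φ L = 1 := by
    show Γ (clamp L) 0 = 1
    rw [hclampL, hΓL, hγb, hq]
    rfl
  have hψL : ψ L = 1 := by
    show Γ (clamp L) 1 = 1
    rw [hclampL, hΓL, hγb, hq]
    rfl
  -- countable targets
  set D : Set ℝ := Set.range ((↑) : ℚ → ℝ) ∪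
    (fun z : EuclideanSpace ℝ (Fin 2) => z 0) '' (γ '' Set.Icc a b ∩ Θ) with hD
  set E : Set ℝ := Set.range ((↑) : ℚ → ℝ) with hE
  have hDc : D.Countable := (Set.countable_range _).union (hcount.image _)
  have hEc : E.Countable := Set.countable_range _
  have cover : ∀ t, φ t ∈ D ∨ ψ t ∈ E := by
    intro t
    have hz := hΓ'img t
    by_cases hzΘ : Γ' t ∈ Θ
    · left
      exact Or.inr ⟨Γ' t, ⟨hz, hzΘ⟩, rfl⟩
    · obtain ⟨t', ht', hzt'⟩ := hz
      have hzM : Γ' t ∈ Msq := hzt' ▸ hmem t' ht'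
      rw [hM] at hzM
      rw [hΘ] at hzΘ
      by_cases h0 : Γ' t 0 ∈ Set.range ((↑) : ℚ → ℝ)
      · exact Or.inl (Or.inl h0)
      · by_cases h1 : Γ' t 1 ∈ Set.range ((↑) : ℚ → ℝ)
        · exact Or.inr h1
        · exact absurd (⟨⟨hzM.1, h0⟩, ⟨hzM.2, h1⟩⟩ :
            Γ' t 0 ∈ Set.Icc (0:ℝ) 1 \ Set.range ((↑) : ℚ → ℝ) ∧
            Γ' t 1 ∈ Set.Icc (0:ℝ) 1 \ Set.range ((↑) : ℚ → ℝ)) hzΘ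
  have := key_lemma hφlip hψlip hL0 hDc hEc cover hφ0 hφL hψ0 hψL
  linarith


/-- In `M = [0,1]²`, the set `Θ = ([0,1] \ ℚ)²` is not permeable: there is `ε > 0` such that
every path in `M` from `(0,0)` to `(1,1)` of length less than `√2 + ε` meets `Θ` in
uncountably many points. In particular `Θ` is not permeable relative to `M`. -/
theorem stmt13
    (Msq : Set (EuclideanSpace ℝ (Fin 2)))
    (hM : Msq = {p | p 0 ∈ Set.Icc (0 : ℝ) 1 ∧ p 1 ∈ Set.Icc (0 : ℝ) 1})
    (Θ : Set (EuclideanSpace ℝ (Fin 2)))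
    (hΘ : Θ = {p | p 0 ∈ Set.Icc (0 : ℝ) 1 \ Set.range ((↑) : ℚ → ℝ) ∧
                   p 1 ∈ Set.Icc (0 : ℝ) 1 \ Set.range ((↑) : ℚ → ℝ)})
    (p q : EuclideanSpace ℝ (Fin 2)) (hp : p = WithLp.toLp 2 ![0, 0]) (hq : q = WithLp.toLp 2 ![1, 1]) :
    (∃ ε > (0 : ℝ), ∀ (γ : ℝ → EuclideanSpace ℝ (Fin 2)) (a b : ℝ),
      IsPathIn Msq γ a b p q → pathLength γ a b < ENNReal.ofReal (Real.sqrt 2 + ε) →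
        ¬ (γ '' Set.Icc a b ∩ Θ).Countable) ∧
    ¬ PermeableIn Msq Θ := by
  have hsqrt2 : Real.sqrt 2 < 2 := by
    nlinarith [Real.sq_sqrt (by norm_num : (0:ℝ) ≤ 2), Real.sqrt_nonneg 2]
  have hsqrt0 : 0 ≤ Real.sqrt 2 := Real.sqrt_nonneg 2
  have hkey : ∀ (γ : ℝ → EuclideanSpace ℝ (Fin 2)) (a b : ℝ),
      IsPathIn Msq γ a b p q → pathLength γ a b < ENNReal.ofReal 2 →
        ¬ (γ '' Set.Icc a b ∩ Θ).Countable := by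
    intro γ a b hpath hlen hcount
    exact absurd hlen (not_lt.2 (main_path Msq hM Θ hΘ p q hp hq γ a b hpath hcount))
  constructor
  · refine ⟨2 - Real.sqrt 2, by linarith, fun γ a b hpath hlen => ?_⟩
    apply hkey γ a b hpath
    rwa [show Real.sqrt 2 + (2 - Real.sqrt 2) = 2 by ring] at hlen
  · -- not permeable
    intro hperm
    have hpM : p ∈ Msq := by
      rw [hM, hp]
      constructor <;> simp [Matrix.cons_val_zero, Matrix.cons_val_one]
    have hqM : q ∈ Msq := by
      rw [hM, hq]
      constructor <;> simp [Matrix.cons_val_zero, Matrix.cons_val_one]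
    have heq := hperm p hpM q hqM
    -- the straight segment gives intrinsicDist ≤ ofReal √2
    set seg : ℝ → EuclideanSpace ℝ (Fin 2) := fun t => WithLp.toLp 2 (fun _ => t) with hseg
    have hsegpath : IsPathIn Msq seg 0 1 p q := by
      refine ⟨zero_le_one, ?_, ?_, ?_, ?_⟩
      · exact ((PiLp.continuous_toLp _ _).comp (continuous_pi fun i => continuous_id)).continuousOn
      · rw [hp]; ext i; fin_cases i <;> rfl
      · rw [hq]; ext i; fin_cases i <;> rfl
      · intro t ht
        rw [hM]
        exact ⟨ht, ht⟩
    have hseglen : pathLength seg 0 1 ≤ ENNReal.ofReal (Real.sqrt 2) := by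
      have hliponE : LipschitzOnWith (Real.sqrt 2).toNNReal seg (Icc (0:ℝ) 1) := by
        intro s hs t ht
        rw [edist_dist, edist_dist]
        have hd : dist (seg s) (seg t) = Real.sqrt 2 * dist s t := by
          rw [EuclideanSpace.dist_eq]
          have : ∀ i : Fin 2, dist (seg s i) (seg t i) ^ 2 = dist s t ^ 2 := fun i => rfl
          rw [Finset.sum_congr rfl (fun i _ => this i)]
          rw [Finset.sum_const, Finset.card_univ, Fintype.card_fin]
          rw [show (2 : ℕ) • (dist s t ^ 2) = 2 * dist s t ^ 2 by ring]
          rw [Real.sqrt_mul (by norm_num) _, Real.sqrt_sq dist_nonneg]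
        rw [hd, ENNReal.ofReal_mul hsqrt0]
        gcongr
        · rw [ENNReal.ofReal, ENNReal.coe_le_coe]
      have hmaps : MapsTo (id : ℝ → ℝ) (Icc (0:ℝ) 1) (Icc (0:ℝ) 1) := fun x hx => hx
      have h1 := hliponE.comp_eVariationOn_le hmaps
      have hid : eVariationOn (id : ℝ → ℝ) (Icc (0:ℝ) 1) ≤ ENNReal.ofReal 1 := by
        have hmono : MonotoneOn (id : ℝ → ℝ) (Icc (0:ℝ) 1) := fun x _ y _ h => h
        have := hmono.eVariationOn_le (⟨le_rfl, zero_le_one⟩ : (0:ℝ) ∈ Icc (0:ℝ) 1)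
          (⟨zero_le_one, le_rfl⟩ : (1:ℝ) ∈ Icc (0:ℝ) 1)
        rw [Set.inter_eq_self_of_subset_right (Icc_subset_Icc le_rfl le_rfl)] at this
        simpa using this
      calc pathLength seg 0 1 = eVariationOn (seg ∘ id) (Icc 0 1) := rfl
        _ ≤ (Real.sqrt 2).toNNReal * eVariationOn (id : ℝ → ℝ) (Icc 0 1) := h1
        _ ≤ (Real.sqrt 2).toNNReal * ENNReal.ofReal 1 := by gcongr
        _ = ENNReal.ofReal (Real.sqrt 2) := by
            rw [ENNReal.ofReal_one, mul_one]; rfl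
    have hintr : intrinsicDist Msq p q ≤ ENNReal.ofReal (Real.sqrt 2) := by
      refine le_trans (sInf_le ?_) hseglen
      exact ⟨seg, 0, 1, hsegpath, hseglen.trans_lt ENNReal.ofReal_lt_top, rfl⟩
    have hth : ENNReal.ofReal 2 ≤ thetaDistIn Msq Θ p q := by
      refine le_sInf ?_
      rintro L ⟨γ, a, b, hpath, hfin, hclos, rfl⟩
      refine main_path Msq hM Θ hΘ p q hp hq γ a b hpath (hclos.mono ?_)
      intro z hz
      have hz' := hz
      obtain ⟨⟨t, ht, hzt⟩, _⟩ := hz'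
      exact ⟨subset_closure hz, hzt ▸ hpath.2.2.2.2 t ht⟩
    rw [heq] at hth
    have hcontra := hth.trans hintr
    rw [ENNReal.ofReal_le_ofReal_iff hsqrt0] at hcontra
    linarith
end

section
/- Let Θ ⊆ ℝ^d be a Lebesgue null set. Then for all x, y ∈ ℝ^d and all ε > 0 there exists a polygonal chain γ : [a,b] → ℝ^d from x to y with ℓ(γ) < ‖y - x‖ + ε such that the set {t ∈ [a,b] : γ(t) ∈ Θ} has one-dimensional Lebesgue measure zero. -/
open Set MeasureTheory ENNReal

/-- `γ` restricted to `[a,b]` is a polygonal chain: there is a partition of `[a,b]` on whose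
subintervals `γ` is an affine parametrization of a segment. -/
def IsPolygonalChainOn {E : Type*} [NormedAddCommGroup E] [NormedSpace ℝ E]
    (γ : ℝ → E) (a b : ℝ) : Prop :=
  ∃ (n : ℕ) (t : Fin (n + 1) → ℝ), StrictMono t ∧ t 0 = a ∧ t (Fin.last n) = b ∧
    ∀ (k : Fin n), ∀ s ∈ Set.Icc (t k.castSucc) (t k.succ),
      γ s = γ (t k.castSucc) + ((s - t k.castSucc) / (t k.succ - t k.castSucc)) •
        (γ (t k.succ) - γ (t k.castSucc))

lemma segment_ae_null {d : ℕ} {Θ' : Set (EuclideanSpace ℝ (Fin d))}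
    (hm : MeasurableSet Θ') (h0 : volume Θ' = 0) (p : EuclideanSpace ℝ (Fin d)) :
    ∀ᵐ z : EuclideanSpace ℝ (Fin d),
      volume {t : ℝ | t ∈ Set.Icc (0:ℝ) 1 ∧ p + t • (z - p) ∈ Θ'} = 0 := by
  set s : Set (EuclideanSpace ℝ (Fin d) × ℝ) :=
    {q | q.2 ∈ Set.Ioc (0:ℝ) 1 ∧ p + q.2 • (q.1 - p) ∈ Θ'} with hs_def
  have hcont : Continuous fun q : EuclideanSpace ℝ (Fin d) × ℝ => p + q.2 • (q.1 - p) :=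
    continuous_const.add (continuous_snd.smul (continuous_fst.sub continuous_const))
  have hs : MeasurableSet s :=
    (measurable_snd measurableSet_Ioc).inter (hcont.measurable hm)
  have key : (volume.prod volume) s = 0 := by
    rw [Measure.prod_apply_symm hs]
    have hslice : ∀ t : ℝ, volume ((fun z => (z, t)) ⁻¹' s) = 0 := by
      intro t
      by_cases ht : t ∈ Set.Ioc (0:ℝ) 1
      · have harg : ∀ z : EuclideanSpace ℝ (Fin d),
            p + t • (z - p) = t • z + (p - t • p) := by intro z; module
        have hpre : (fun z => (z, t)) ⁻¹' s
            = (t • ·) ⁻¹' ((· + (p - t • p)) ⁻¹' Θ') := by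
          ext z
          simp only [mem_preimage, hs_def, mem_setOf_eq]
          constructor
          · rintro ⟨-, h⟩; rw [harg z] at h; exact h
          · intro h; exact ⟨ht, by rw [harg z]; exact h⟩
        rw [hpre, Measure.addHaar_preimage_smul volume (ne_of_gt ht.1),
          (measurePreserving_add_right volume (p - t • p)).measure_preimage
            hm.nullMeasurableSet, h0, mul_zero]
      · have : (fun z => (z, t)) ⁻¹' s = ∅ := by
          ext z
          simp only [mem_preimage, hs_def, mem_setOf_eq, mem_empty_iff_false, iff_false, not_and]
          intro h1 _
          exact absurd h1 ht
        rw [this, measure_empty]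
    rw [lintegral_congr hslice, lintegral_zero]
  have haes := Measure.measure_ae_null_of_prod_null key
  filter_upwards [haes] with z hz
  have hz' : volume (Prod.mk z ⁻¹' s) = 0 := hz
  have hsub : {t : ℝ | t ∈ Set.Icc (0:ℝ) 1 ∧ p + t • (z - p) ∈ Θ'}
      ⊆ {(0:ℝ)} ∪ Prod.mk z ⁻¹' s := by
    rintro t ⟨⟨ht0, ht1⟩, htm⟩
    rcases eq_or_lt_of_le ht0 with h | h
    · exact Or.inl (by simp [← h])
    · exact Or.inr ⟨⟨h, ht1⟩, htm⟩
  exact measure_mono_null hsub (measure_union_null (measure_singleton 0) hz')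


/-- For a Lebesgue null set `Θ ⊆ ℝ^d`, any two points can be joined by a polygonal chain of
length less than `‖y - x‖ + ε` whose parameter set hitting `Θ` is a (1-dimensional) null set. -/
theorem stmt14 {d : ℕ} (Θ : Set (EuclideanSpace ℝ (Fin d))) (hΘ : volume Θ = 0)
    (x y : EuclideanSpace ℝ (Fin d)) (ε : ℝ) (hε : 0 < ε) :
    ∃ (γ : ℝ → EuclideanSpace ℝ (Fin d)) (a b : ℝ), a ≤ b ∧
      IsPolygonalChainOn γ a b ∧ γ a = x ∧ γ b = y ∧
      pathLength γ a b < ENNReal.ofReal (‖y - x‖ + ε) ∧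
      volume {t ∈ Set.Icc a b | γ t ∈ Θ} = 0 := by
  classical
  obtain ⟨Θ', hΘsub, hm, h0⟩ : ∃ Θ', Θ ⊆ Θ' ∧ MeasurableSet Θ' ∧ volume Θ' = 0 :=
    ⟨toMeasurable volume Θ, subset_toMeasurable _ _, measurableSet_toMeasurable _ _, by
      rw [measure_toMeasurable]; exact hΘ⟩
  set z0 : EuclideanSpace ℝ (Fin d) := (2⁻¹ : ℝ) • (x + y) with hz0
  set δ : ℝ := ε / 3 with hδ
  have hδpos : 0 < δ := by positivity
  have h1 := segment_ae_null hm h0 x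
  have h2 := segment_ae_null hm h0 y
  have hball : 0 < volume (Metric.ball z0 δ) := Metric.measure_ball_pos volume z0 hδpos
  have hc : volume {z : EuclideanSpace ℝ (Fin d) |
      ¬ (volume {t : ℝ | t ∈ Set.Icc (0:ℝ) 1 ∧ x + t • (z - x) ∈ Θ'} = 0 ∧
         volume {t : ℝ | t ∈ Set.Icc (0:ℝ) 1 ∧ y + t • (z - y) ∈ Θ'} = 0)} = 0 :=
    ae_iff.mp (h1.and h2)
  obtain ⟨z, hzb, hz1, hz2⟩ : ∃ z ∈ Metric.ball z0 δ,
      volume {t : ℝ | t ∈ Set.Icc (0:ℝ) 1 ∧ x + t • (z - x) ∈ Θ'} = 0 ∧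
      volume {t : ℝ | t ∈ Set.Icc (0:ℝ) 1 ∧ y + t • (z - y) ∈ Θ'} = 0 := by
    by_contra h
    push_neg at h
    refine hball.ne' (measure_mono_null (fun w hw => ?_) hc)
    exact fun hab => h w hw hab.1 hab.2
  clear hc h1 h2
  set γ : ℝ → EuclideanSpace ℝ (Fin d) :=
    fun t => if t ≤ 1 then x + t • (z - x) else z + (t - 1) • (y - z) with hγ
  have hγ0 : γ 0 = x := by simp only [hγ]; rw [if_pos zero_le_one]; module
  have hγ1 : γ 1 = x + (1:ℝ) • (z - x) := by simp only [hγ]; rw [if_pos le_rfl]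
  have hγ2 : γ 2 = y := by
    simp only [hγ]; rw [if_neg (by norm_num : ¬ (2:ℝ) ≤ 1)]; module
  refine ⟨γ, 0, 2, by norm_num, ?_, hγ0, hγ2, ?_, ?_⟩
  · -- polygonal chain
    refine ⟨2, fun i => (i.1 : ℝ), fun i j h => Nat.cast_lt.mpr h, by norm_num, by norm_num, ?_⟩
    intro k s hs
    fin_cases k
    · norm_num at hs ⊢
      have hval : γ s = x + s • (z - x) := by simp only [hγ]; rw [if_pos hs.2]
      rw [hval, hγ0, hγ1]
      module
    · norm_num at hs ⊢
      rcases eq_or_lt_of_le hs.1 with h | h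
      · rw [← h, hγ1, hγ2]
        module
      · have hval : γ s = z + (s - 1) • (y - z) := by
          simp only [hγ]; rw [if_neg (not_le.mpr h)]
        rw [hval, hγ1, hγ2]
        module
  · -- length
    have e1 : eVariationOn γ (Set.Icc (0:ℝ) 1)
        = eVariationOn (fun t : ℝ => x + (t - 0) • (z - x)) (Set.Icc 0 1) := by
      apply eVariationOn.eq_of_eqOn
      intro t ht
      simp only [hγ]
      rw [if_pos ht.2]
      module
    have e2 : eVariationOn γ (Set.Icc (1:ℝ) 2)
        = eVariationOn (fun t : ℝ => z + (t - 1) • (y - z)) (Set.Icc 1 2) := by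
      apply eVariationOn.eq_of_eqOn
      intro t ht
      simp only [hγ]
      rcases eq_or_lt_of_le ht.1 with h | h
      · rw [← h, if_pos le_rfl]; module
      · rw [if_neg (not_le.mpr h)]
    have idv : ∀ a b : ℝ, a ≤ b → eVariationOn id (Set.Icc a b) ≤ ENNReal.ofReal (b - a) := by
      intro a b hab
      have h := MonotoneOn.eVariationOn_le (f := id) (s := Set.Icc a b)
        (fun u _ v _ h => h) (Set.left_mem_Icc.2 hab) (Set.right_mem_Icc.2 hab)
      simpa using h
    have seg : ∀ (v w : EuclideanSpace ℝ (Fin d)) (c a b : ℝ), a ≤ b →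
        eVariationOn (fun t : ℝ => v + (t - c) • (w - v)) (Set.Icc a b)
          ≤ ENNReal.ofReal ((b - a) * ‖w - v‖) := by
      intro v w c a b hab
      have lip : LipschitzWith ‖w - v‖₊ (fun t : ℝ => v + (t - c) • (w - v)) := by
        apply LipschitzWith.of_dist_le_mul
        intro s u
        have harg : (v + (s - c) • (w - v)) - (v + (u - c) • (w - v)) = (s - u) • (w - v) := by
          module
        rw [dist_eq_norm, harg, norm_smul, Real.dist_eq, Real.norm_eq_abs, mul_comm, coe_nnnorm]
      calc eVariationOn (fun t : ℝ => v + (t - c) • (w - v)) (Set.Icc a b)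
          = eVariationOn ((fun t : ℝ => v + (t - c) • (w - v)) ∘ id) (Set.Icc a b) := rfl
        _ ≤ ‖w - v‖₊ * eVariationOn id (Set.Icc a b) :=
            LipschitzOnWith.comp_eVariationOn_le (LipschitzWith.lipschitzOnWith (s := Set.univ) lip)
              (Set.mapsTo_univ _ _)
        _ ≤ ‖w - v‖₊ * ENNReal.ofReal (b - a) := mul_le_mul_right (idv a b hab) _
        _ = ENNReal.ofReal ((b - a) * ‖w - v‖) := by
            rw [← ENNReal.ofReal_coe_nnreal, coe_nnnorm, ← ENNReal.ofReal_mul (norm_nonneg _), mul_comm]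
    have hsplit : eVariationOn γ (Set.Icc (0:ℝ) 1) + eVariationOn γ (Set.Icc (1:ℝ) 2)
        = eVariationOn γ (Set.Icc (0:ℝ) 2) := by
      have h := eVariationOn.Icc_add_Icc γ (zero_le_one (α := ℝ)) one_le_two (Set.mem_univ (1:ℝ))
      simpa using h
    have hzd : dist z z0 < δ := Metric.mem_ball.mp hzb
    have hx0 : ‖z0 - x‖ = 2⁻¹ * ‖y - x‖ := by
      have h : z0 - x = (2⁻¹ : ℝ) • (y - x) := by rw [hz0]; module
      rw [h, norm_smul, Real.norm_eq_abs]; norm_num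
    have hy0 : ‖y - z0‖ = 2⁻¹ * ‖y - x‖ := by
      have h : y - z0 = (2⁻¹ : ℝ) • (y - x) := by rw [hz0]; module
      rw [h, norm_smul, Real.norm_eq_abs]; norm_num
    have hzx : ‖z - x‖ ≤ dist z z0 + 2⁻¹ * ‖y - x‖ := by
      calc ‖z - x‖ = dist z x := (dist_eq_norm z x).symm
        _ ≤ dist z z0 + dist z0 x := dist_triangle _ _ _
        _ = dist z z0 + 2⁻¹ * ‖y - x‖ := by rw [dist_eq_norm z0 x, hx0]
    have hyz : ‖y - z‖ ≤ 2⁻¹ * ‖y - x‖ + dist z z0 := by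
      calc ‖y - z‖ = dist y z := (dist_eq_norm y z).symm
        _ ≤ dist y z0 + dist z0 z := dist_triangle _ _ _
        _ = 2⁻¹ * ‖y - x‖ + dist z z0 := by
            rw [dist_eq_norm y z0, hy0, dist_comm z0 z]
    have hreal : ‖z - x‖ + ‖y - z‖ < ‖y - x‖ + ε := by
      have h3 : δ = ε / 3 := hδ
      linarith
    calc pathLength γ 0 2 = eVariationOn γ (Set.Icc (0:ℝ) 2) := rfl
      _ = eVariationOn γ (Set.Icc (0:ℝ) 1) + eVariationOn γ (Set.Icc (1:ℝ) 2) := hsplit.symm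
      _ ≤ ENNReal.ofReal ((1 - 0) * ‖z - x‖) + ENNReal.ofReal ((2 - 1) * ‖y - z‖) := by
          refine add_le_add ?_ ?_
          · rw [e1]; exact seg x z 0 0 1 zero_le_one
          · rw [e2]; exact seg z y 1 1 2 one_le_two
      _ = ENNReal.ofReal (‖z - x‖ + ‖y - z‖) := by
          rw [← ENNReal.ofReal_add (by positivity) (by positivity)]
          norm_num
      _ < ENNReal.ofReal (‖y - x‖ + ε) :=
          (ENNReal.ofReal_lt_ofReal_iff (by positivity)).2 hreal
  · -- null set
    have hpre2 : volume ((fun t : ℝ => 2 - t) ⁻¹'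
        {u : ℝ | u ∈ Set.Icc (0:ℝ) 1 ∧ y + u • (z - y) ∈ Θ'}) = 0 := by
      rw [(Measure.measurePreserving_sub_left volume (2:ℝ)).measure_preimage
        (NullMeasurableSet.of_null hz2)]
      exact hz2
    have hsub : {t : ℝ | t ∈ Set.Icc (0:ℝ) 2 ∧ γ t ∈ Θ}
        ⊆ {t : ℝ | t ∈ Set.Icc (0:ℝ) 1 ∧ x + t • (z - x) ∈ Θ'}
          ∪ (fun t : ℝ => 2 - t) ⁻¹' {u : ℝ | u ∈ Set.Icc (0:ℝ) 1 ∧ y + u • (z - y) ∈ Θ'} := by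
      rintro t ⟨⟨ht0, ht2⟩, htm⟩
      by_cases hle : t ≤ 1
      · left
        refine ⟨⟨ht0, hle⟩, ?_⟩
        have hval : γ t = x + t • (z - x) := by simp only [hγ]; rw [if_pos hle]
        rw [← hval]; exact hΘsub htm
      · right
        push_neg at hle
        have hm2 : (2 - t) ∈ Set.Icc (0:ℝ) 1 := Set.mem_Icc.mpr ⟨by linarith, by linarith⟩
        refine ⟨hm2, ?_⟩
        have hval : γ t = y + (2 - t) • (z - y) := by
          simp only [hγ]; rw [if_neg (not_le.mpr hle)]; module
        rw [← hval]; exact hΘsub htm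
    exact measure_mono_null hsub (measure_union_null hz1 hpre2)
end

section
/- Let Θ := { (t, sin(1/t)) : t ∈ (0, ∞) } ⊆ ℝ² (the topologist's sine curve). Then Θ is permeable in ℝ², but Θ is not finitely permeable: for x = (0,0) and y = (1,0), every path in ℝ² from x to y having finite intersection with Θ has length at least 2, while ‖x − y‖ = 1. -/
open Set MeasureTheory ENNReal

section Aux

open Real

noncomputable abbrev E2 := EuclideanSpace ℝ (Fin 2)

lemma analyticAt_realSin (t : ℝ) : AnalyticAt ℝ Real.sin t := by
  have h : Real.sin = Complex.reCLM ∘ Complex.sin ∘ Complex.ofRealCLM := by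
    funext x
    simp [Complex.sin_ofReal_re]
  rw [h]
  exact (Complex.reCLM.analyticAt _).comp
    (((Complex.differentiable_sin.analyticAt _).restrictScalars).comp
      (Complex.ofRealCLM.analyticAt _))

lemma Zcount (m c : ℝ) : {t : ℝ | 0 < t ∧ Real.sin (1/t) = m*t+c}.Countable := by
  set f : ℝ → ℝ := fun t => Real.sin (1/t) - (m*t+c) with hf
  set Z := {t : ℝ | 0 < t ∧ Real.sin (1/t) = m*t+c} with hZ
  have hfa : AnalyticOnNhd ℝ f (Ioi 0) := by
    intro t ht
    have h1 : AnalyticAt ℝ (fun t : ℝ => 1/t) t := by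
      simp only [one_div]; exact (analyticAt_id (𝕜 := ℝ)).inv (show (id t : ℝ) ≠ 0 from ne_of_gt ht)
    exact ((analyticAt_realSin _).comp h1).sub
      ((analyticAt_const.mul analyticAt_id).add analyticAt_const)
  have hne : ¬ EqOn f 0 (Ioi 0) := by
    intro h
    set K : ℕ := ⌈|m|⌉₊ + 1 with hK
    have hKm : |m| < (K : ℝ) := by
      calc |m| ≤ (⌈|m|⌉₊ : ℝ) := Nat.le_ceil _
      _ < K := by rw [hK]; push_cast; linarith
    have hK1 : (1:ℝ) ≤ K := by rw [hK]; push_cast; linarith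
    have hpi := Real.pi_gt_three
    have ha : (0:ℝ) < π/2 + K*(2*π) := by nlinarith
    have hb : (0:ℝ) < -(π/2) + K*(2*π) := by nlinarith
    have haK : (K:ℝ) ≤ π/2 + K*(2*π) := by nlinarith
    have hbK : (K:ℝ) ≤ -(π/2) + K*(2*π) := by nlinarith
    have h1 : f (π/2 + K*(2*π))⁻¹ = 0 := h (by simpa using ha)
    have h2 : f (-(π/2) + K*(2*π))⁻¹ = 0 := h (by simpa using hb)
    rw [hf] at h1 h2
    simp only [one_div, inv_inv] at h1 h2
    rw [Real.sin_add_nat_mul_two_pi, Real.sin_pi_div_two] at h1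
    rw [Real.sin_add_nat_mul_two_pi] at h2
    rw [Real.sin_neg, Real.sin_pi_div_two] at h2
    -- h1 : 1 - (m * a⁻¹ + c) = 0, h2 : -1 - (m * b⁻¹ + c) = 0
    set t1 := (π/2 + K*(2*π))⁻¹ with ht1
    set t2 := (-(π/2) + K*(2*π))⁻¹ with ht2
    have ht1' : 0 < t1 ∧ t1 ≤ (K:ℝ)⁻¹ := ⟨inv_pos.2 ha, by
      apply inv_anti₀ (by linarith) haK⟩
    have ht2' : 0 < t2 ∧ t2 ≤ (K:ℝ)⁻¹ := ⟨inv_pos.2 hb, by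
      apply inv_anti₀ (by linarith) hbK⟩
    have hm : m * (t1 - t2) = 2 := by nlinarith [h1, h2]
    have habs : |t1 - t2| ≤ (K:ℝ)⁻¹ := by
      rw [abs_sub_le_iff]; constructor <;> nlinarith [ht1'.1, ht1'.2, ht2'.1, ht2'.2]
    have : (2:ℝ) = |m| * |t1 - t2| := by rw [← abs_mul, hm]; norm_num
    have hKpos : (0:ℝ) < K := by linarith
    nlinarith [abs_nonneg m, mul_le_mul hKm.le habs (abs_nonneg _) (le_of_lt (lt_of_le_of_lt (abs_nonneg m) hKm)), mul_inv_cancel₀ (ne_of_gt hKpos)]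
  have hfin : ∀ n : ℕ, (Z ∩ Icc (1/(n+1) : ℝ) (n+1)).Finite := by
    intro n
    by_contra hinf
    rw [← Set.not_infinite, not_not] at hinf
    obtain ⟨t0, ht0K, hacc⟩ := hinf.exists_accPt_of_subset_isCompact isCompact_Icc
      inter_subset_right
    have ht0 : (0:ℝ) < t0 := lt_of_lt_of_le (by positivity) ht0K.1
    have hfreq : ∃ᶠ z in nhdsWithin t0 {t0}ᶜ, f z = 0 := by
      have h0 := accPt_iff_frequently.1 hacc
      rw [frequently_nhdsWithin_iff]
      refine h0.mono ?_
      rintro z ⟨hz1, ⟨_, hz2⟩, _⟩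
      exact ⟨by simp only [hf]; rw [hz2]; ring, hz1⟩
    have := hfa.eqOn_zero_of_preconnected_of_frequently_eq_zero isPreconnected_Ioi
      (mem_Ioi.2 ht0) hfreq
    exact hne this
  have hsub : Z ⊆ ⋃ n : ℕ, (Z ∩ Icc (1/(n+1) : ℝ) (n+1)) := by
    intro t ht
    obtain ⟨n, hn⟩ := exists_nat_ge (max t t⁻¹)
    refine mem_iUnion.2 ⟨n, ht, ?_, ?_⟩
    · rw [div_le_iff₀ (by positivity)]
      have h2 : t⁻¹ ≤ (n:ℝ) + 1 := le_trans (le_trans (le_max_right _ _) hn) (by linarith)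
      calc (1:ℝ) = t * t⁻¹ := (mul_inv_cancel₀ (ne_of_gt ht.1)).symm
      _ ≤ t * ((n:ℝ)+1) := by nlinarith [ht.1]
    · exact le_trans (le_trans (le_max_left _ _) hn) (by linarith)
  exact (Set.countable_iUnion fun n => (hfin n).countable).mono hsub


lemma point_ext {a b : ℝ} (p : E2) (hp0 : p 0 = a) (hp1 : p 1 = b) : p = !₂[a, b] := by
  ext i; fin_cases i <;> simp [hp0, hp1]

lemma seg_apply (x y : E2) (u : ℝ) (i : Fin 2) :
    (x + u • (y - x)) i = x i + u * (y i - x i) := by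
  simp [PiLp.add_apply, PiLp.smul_apply, PiLp.sub_apply]

lemma seg_closure_countable (Θ : Set E2)
    (hΘ : Θ = {p : E2 | 0 < p 0 ∧ p 1 = Real.sin (1 / p 0)}) (x y : E2) :
    (closure ((fun u : ℝ => x + u • (y - x)) '' Icc (0:ℝ) 1 ∩ Θ)).Countable := by
  set γ : ℝ → E2 := fun u => x + u • (y - x) with hγ
  have hcont : Continuous γ := by
    exact continuous_const.add (continuous_id.smul continuous_const)
  set L := γ '' Icc (0:ℝ) 1 with hL
  have hLc : IsClosed L := (isCompact_Icc.image hcont).isClosed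
  set S := L ∩ Θ with hS
  -- points of the closure with positive first coordinate are in S
  have claim1 : ∀ p ∈ closure S, 0 < p 0 → p ∈ S := by
    intro p hp hp0
    set B : Set E2 := {q | p 0 / 2 ≤ q 0} with hB
    have hBc : IsClosed B := isClosed_le continuous_const (by fun_prop)
    have hfc : ContinuousOn (fun q : E2 => q 1 - Real.sin (1 / q 0)) B := by
      apply ContinuousOn.sub (Continuous.continuousOn (by fun_prop : Continuous fun q : E2 => q 1))
      apply Real.continuous_sin.comp_continuousOn
      apply ContinuousOn.div continuousOn_const (Continuous.continuousOn (by fun_prop : Continuous fun q : E2 => q 0))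
      intro q hq
      have : (0:ℝ) < p 0 / 2 := by linarith
      exact ne_of_gt (lt_of_lt_of_le this hq)
    have hAc : IsClosed (B ∩ (fun q : E2 => q 1 - Real.sin (1 / q 0)) ⁻¹' {0}) :=
      hfc.preimage_isClosed_of_isClosed hBc isClosed_singleton
    have hCc : IsClosed (L ∩ (B ∩ (fun q : E2 => q 1 - Real.sin (1 / q 0)) ⁻¹' {0})) :=
      hLc.inter hAc
    set U : Set E2 := {q | p 0 / 2 < q 0} with hU
    have hUo : IsOpen U := isOpen_lt continuous_const (by fun_prop)
    have hpU : p ∈ U := by simp only [hU, mem_setOf_eq]; linarith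
    have h1 : p ∈ closure (U ∩ S) := hUo.inter_closure ⟨hpU, hp⟩
    have h2 : U ∩ S ⊆ L ∩ (B ∩ (fun q : E2 => q 1 - Real.sin (1 / q 0)) ⁻¹' {0}) := by
      rintro q ⟨hq1, hq2, hq3⟩
      rw [hΘ] at hq3
      refine ⟨hq2, ?_, by simp [hq3.2]⟩
      simp only [hB, mem_setOf_eq]
      exact le_of_lt hq1
    have h3 := (closure_minimal h2 hCc) h1
    refine ⟨h3.1, ?_⟩
    rw [hΘ]
    have := h3.2.2
    simp only [mem_preimage, mem_singleton_iff, sub_eq_zero] at this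
    exact ⟨hp0, this⟩
  have claim0 : ∀ p ∈ closure S, 0 ≤ p 0 := by
    intro p hp
    have hsub : S ⊆ {q : E2 | 0 ≤ q 0} := by
      rintro q ⟨_, hq⟩; rw [hΘ] at hq; exact le_of_lt hq.1
    have : IsClosed {q : E2 | 0 ≤ q 0} := isClosed_le continuous_const (by fun_prop)
    exact (closure_minimal hsub this) hp
  set T : Set E2 := {p ∈ L | p 0 = 0} with hT
  have hcl : closure S ⊆ S ∪ T := by
    intro p hp
    rcases lt_or_eq_of_le (claim0 p hp) with h | h
    · exact Or.inl (claim1 p hp h)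
    · have hpL : p ∈ L := closure_minimal (inter_subset_left) hLc hp
      exact Or.inr ⟨hpL, h.symm⟩
  by_cases hxy : y 0 - x 0 = 0
  · -- vertical (or degenerate) segment
    have hcoord : ∀ p ∈ L, p 0 = x 0 := by
      rintro p ⟨u, _, rfl⟩
      simp only [hγ]
      rw [seg_apply, hxy, mul_zero, add_zero]
    by_cases hc : 0 < x 0
    · have hsub : S ⊆ {(!₂[x 0, Real.sin (1 / x 0)] : E2)} := by
        rintro q ⟨hq1, hq2⟩
        rw [hΘ] at hq2
        have h0 := hcoord q hq1
        exact mem_singleton_iff.2 (point_ext q h0 (by rw [hq2.2, h0]))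
      exact ((countable_singleton _).mono
        (closure_minimal hsub isClosed_singleton)).mono (le_refl _)
    · have : S = ∅ := by
        ext q
        simp only [mem_empty_iff_false, iff_false]
        rintro ⟨hq1, hq2⟩
        rw [hΘ] at hq2
        simp only [mem_setOf_eq] at hq2
        rw [hcoord q hq1] at hq2
        exact hc hq2.1
      rw [this, closure_empty]
      exact countable_empty
  · -- non-vertical segment
    set m := (y 1 - x 1) / (y 0 - x 0) with hm
    set c := x 1 - x 0 * m with hc
    have hScount : S.Countable := by
      have hsub : S ⊆ (fun t : ℝ => (!₂[t, Real.sin (1/t)] : E2)) ''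
          {t : ℝ | 0 < t ∧ Real.sin (1/t) = m*t+c} := by
        rintro p ⟨⟨u, _, rfl⟩, hp2⟩
        rw [hΘ] at hp2
        obtain ⟨hpos, hsin⟩ := hp2
        refine ⟨(x + u • (y - x)) 0, ⟨hpos, ?_⟩, ?_⟩
        · rw [← hsin]
          simp only [hγ, seg_apply]
          have hm' : m * (y 0 - x 0) = y 1 - x 1 := by rw [hm]; exact div_mul_cancel₀ _ hxy
          linear_combination (-u) * hm' - hc
        · exact (point_ext _ rfl hsin).symm
      exact ((Zcount m c).image _).mono hsub
    have hTsub : T.Subsingleton := by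
      rintro p ⟨⟨u, _, rfl⟩, hp0⟩ q ⟨⟨v, _, rfl⟩, hq0⟩
      simp only [hγ, seg_apply] at hp0 hq0
      have : u = v := by
        have h := sub_eq_zero.2 (hp0.trans hq0.symm)
        have : (u - v) * (y 0 - x 0) = 0 := by linarith
        rcases mul_eq_zero.1 this with h' | h'
        · linarith
        · exact absurd h' hxy
      simp only [hγ]
      rw [this]
    exact (hScount.union hTsub.countable).mono hcl


section Seg2

variable {V : Type*} [NormedAddCommGroup V] [NormedSpace ℝ V]

lemma seg_isPath (x y : V) : IsPathIn Set.univ (fun u : ℝ => x + u • (y - x)) 0 1 x y :=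
  ⟨zero_le_one, (continuous_const.add (continuous_id.smul continuous_const)).continuousOn,
    by simp, by simp, fun t _ => mem_univ _⟩

lemma seg_length_le (x y : V) :
    pathLength (fun u : ℝ => x + u • (y - x)) 0 1 ≤ ENNReal.ofReal (dist x y) := by
  have hlip : LipschitzWith ‖y - x‖₊ (fun u : ℝ => x + u • (y - x)) := by
    apply LipschitzWith.of_dist_le_mul
    intro u v
    rw [dist_eq_norm, dist_eq_norm]
    rw [show x + u • (y - x) - (x + v • (y - x)) = (u - v) • (y - x) by module]
    rw [norm_smul, coe_nnnorm, Real.norm_eq_abs, mul_comm]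
  have h1 : pathLength (fun u : ℝ => x + u • (y - x)) 0 1
      = eVariationOn ((fun u : ℝ => x + u • (y - x)) ∘ id) (Icc 0 1) := rfl
  rw [pathLength]
  have h2 := (LipschitzWith.lipschitzOnWith hlip (s := Icc (0:ℝ) 1)).comp_eVariationOn_le
    (Set.mapsTo_id (Icc (0:ℝ) 1))
  refine le_trans (le_of_eq (by rfl)) (h2.trans ?_)
  have h3 : eVariationOn (id : ℝ → ℝ) (Icc 0 1) ≤ ENNReal.ofReal ((1:ℝ) - 0) := by
    have := (monotone_id.monotoneOn (Icc (0:ℝ) 1)).eVariationOn_le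
      (Set.left_mem_Icc.2 zero_le_one) (Set.right_mem_Icc.2 zero_le_one)
    rwa [Set.inter_self] at this
  calc (‖y - x‖₊ : ℝ≥0∞) * eVariationOn (id : ℝ → ℝ) (Icc 0 1)
      ≤ (‖y - x‖₊ : ℝ≥0∞) * ENNReal.ofReal ((1:ℝ) - 0) := by gcongr
    _ = ENNReal.ofReal (dist x y) := by
        rw [show ((1:ℝ) - 0) = 1 by ring, ENNReal.ofReal_one, mul_one,
          ← ENNReal.ofReal_coe_nnreal, coe_nnnorm, dist_eq_norm, norm_sub_rev]

lemma intrinsic_eq (x y : V) :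
    intrinsicDist (Set.univ : Set V) x y = ENNReal.ofReal (dist x y) := by
  apply le_antisymm
  · refine le_trans (sInf_le ?_) (seg_length_le x y)
    exact ⟨_, 0, 1, seg_isPath x y, lt_of_le_of_lt (seg_length_le x y) ofReal_lt_top, rfl⟩
  · apply le_sInf
    rintro L ⟨γ, a, b, ⟨hab, hcont, hga, hgb, _⟩, _, rfl⟩
    rw [pathLength, ← edist_dist]
    calc edist x y = edist (γ a) (γ b) := by rw [hga, hgb]
    _ ≤ eVariationOn γ (Icc a b) :=
        eVariationOn.edist_le γ (Set.left_mem_Icc.2 hab) (Set.right_mem_Icc.2 hab)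

end Seg2


lemma proj_lipschitz (i : Fin 2) : LipschitzWith 1 (fun p : E2 => p i) := by
  apply LipschitzWith.of_dist_le_mul
  intro p q
  rw [NNReal.coe_one, one_mul, EuclideanSpace.dist_eq, Real.dist_eq]
  rw [show |p i - q i| = Real.sqrt (|p i - q i|^2) by rw [Real.sqrt_sq_eq_abs, abs_abs]]
  apply Real.sqrt_le_sqrt
  rw [sq_abs]
  have := Finset.single_le_sum (f := fun j => dist (p j) (q j) ^ 2)
    (fun j _ => sq_nonneg _) (Finset.mem_univ i)
  simpa [Real.dist_eq, sq_abs] using this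

lemma sin_hit (w : ℝ) (hw : 0 < w) (e : ℝ) (he : e = 1 ∨ e = -1) :
    ∃ v : ℝ, 0 < v ∧ v < w ∧ Real.sin (1/v) = e := by
  obtain ⟨K, hK⟩ := exists_nat_gt (1/w)
  have hpi := Real.pi_gt_three
  have h1w : 0 < 1/w := by positivity
  rcases he with he | he
  · refine ⟨(π/2 + ((K+1 : ℕ) : ℝ)*(2*π))⁻¹, ?_, ?_, ?_⟩
    · apply inv_pos.2; push_cast; nlinarith
    · rw [show w = (w⁻¹)⁻¹ by rw [inv_inv]]
      apply inv_strictAnti₀ (show (0:ℝ) < w⁻¹ by positivity) (by rw [one_div] at hK; push_cast; nlinarith)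
    · rw [one_div, inv_inv, Real.sin_add_nat_mul_two_pi, Real.sin_pi_div_two, he]
  · refine ⟨(-(π/2) + ((K+1 : ℕ) : ℝ)*(2*π))⁻¹, ?_, ?_, ?_⟩
    · apply inv_pos.2; push_cast; nlinarith
    · rw [show w = (w⁻¹)⁻¹ by rw [inv_inv]]
      apply inv_strictAnti₀ (show (0:ℝ) < w⁻¹ by positivity) (by rw [one_div] at hK; push_cast; nlinarith)
    · rw [one_div, inv_inv, Real.sin_add_nat_mul_two_pi, Real.sin_neg, Real.sin_pi_div_two, he]

lemma key_lower (Θ : Set E2)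
    (hΘ : Θ = {p : E2 | 0 < p 0 ∧ p 1 = Real.sin (1 / p 0)})
    (γ : ℝ → E2) (a b : ℝ)
    (hpath : IsPathIn Set.univ γ a b (!₂[0,0] : E2) (!₂[1,0] : E2))
    (hfin : (γ '' Set.Icc a b ∩ Θ).Finite) :
    ENNReal.ofReal 2 ≤ pathLength γ a b := by
  obtain ⟨hab, hcont, hga, hgb, -⟩ := hpath
  set X : ℝ → ℝ := fun t => γ t 0 with hX
  set Y : ℝ → ℝ := fun t => γ t 1 with hY
  have hXc : ContinuousOn X (Icc a b) := (proj_lipschitz 0).continuous.comp_continuousOn hcont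
  have hYc : ContinuousOn Y (Icc a b) := (proj_lipschitz 1).continuous.comp_continuousOn hcont
  have hXa : X a = 0 := by simp [hX, hga]
  have hXb : X b = 1 := by simp [hX, hgb]
  have hYa : Y a = 0 := by simp [hY, hga]
  have hYb : Y b = 0 := by simp [hY, hgb]
  -- a positive lower bound for first coordinates of intersection points
  obtain ⟨ε, hε0, hε1, hεΘ⟩ : ∃ ε : ℝ, 0 < ε ∧ ε ≤ 1 ∧
      ∀ t ∈ Icc a b, γ t ∈ Θ → ε ≤ X t := by
    by_cases hne : (γ '' Icc a b ∩ Θ).Nonempty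
    · obtain ⟨p, hp, hmin⟩ := Set.exists_min_image _ (fun q : E2 => q 0) hfin hne
      have hp0 : 0 < p 0 := by rw [hΘ] at hp; exact hp.2.1
      refine ⟨min (p 0) 1, lt_min hp0 one_pos, min_le_right _ _, fun t ht htΘ => ?_⟩
      exact le_trans (min_le_left _ _) (hmin (γ t) ⟨mem_image_of_mem _ ht, htΘ⟩)
    · exact ⟨1, one_pos, le_refl _, fun t ht htΘ =>
        absurd ⟨γ t, mem_image_of_mem _ ht, htΘ⟩ hne⟩
  -- last zero of X
  set Sset := {t | t ∈ Icc a b ∧ X t = 0} with hSset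
  have hSc : IsClosed Sset := by
    have : Sset = Icc a b ∩ X ⁻¹' {0} := by ext t; simp [hSset]
    rw [this]
    exact hXc.preimage_isClosed_of_isClosed isClosed_Icc isClosed_singleton
  have hSbdd : BddAbove Sset := ⟨b, fun t ht => ht.1.2⟩
  set s := sSup Sset with hs
  have hsmem : s ∈ Sset := hSc.csSup_mem ⟨a, ⟨⟨le_rfl, hab⟩, hXa⟩⟩ hSbdd
  have hsab : s ∈ Icc a b := hsmem.1
  have hXs : X s = 0 := hsmem.2
  have hsb : s < b := lt_of_le_of_ne hsab.2 (fun h => by rw [h, hXb] at hXs; norm_num at hXs)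
  have hXpos : ∀ t, s < t → t ≤ b → 0 < X t := by
    intro t hst htb
    have htab : t ∈ Icc a b := ⟨le_trans hsab.1 hst.le, htb⟩
    have hneq : X t ≠ 0 := fun h => absurd (le_csSup hSbdd ⟨htab, h⟩) (not_le.2 hst)
    rcases hneq.lt_or_gt with hneg | hpos
    · exfalso
      obtain ⟨r, hr, hXr⟩ := intermediate_value_Icc htb (hXc.mono (Icc_subset_Icc htab.1 le_rfl))
        (show (0:ℝ) ∈ Icc (X t) (X b) from ⟨hneg.le, by rw [hXb]; norm_num⟩)
      have := le_csSup hSbdd (show r ∈ Sset from ⟨⟨le_trans htab.1 hr.1, hr.2⟩, hXr⟩)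
      linarith [hr.1]
    · exact hpos
  -- first time X reaches ε after s
  set Uset := {t | t ∈ Icc s b ∧ X t = ε} with hUset
  have hXcs : ContinuousOn X (Icc s b) := hXc.mono (Icc_subset_Icc hsab.1 le_rfl)
  have hUc : IsClosed Uset := by
    have : Uset = Icc s b ∩ X ⁻¹' {ε} := by ext t; simp [hUset]
    rw [this]
    exact hXcs.preimage_isClosed_of_isClosed isClosed_Icc isClosed_singleton
  have hUne : Uset.Nonempty := by
    obtain ⟨r, hr, hXr⟩ := intermediate_value_Icc hsb.le hXcs
      (show ε ∈ Icc (X s) (X b) from ⟨by rw [hXs]; exact hε0.le, by rw [hXb]; exact hε1⟩)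
    exact ⟨r, hr, hXr⟩
  have hUbdd : BddBelow Uset := ⟨s, fun t ht => ht.1.1⟩
  set u := sInf Uset with hu
  have humem : u ∈ Uset := hUc.csInf_mem hUne hUbdd
  have hXu : X u = ε := humem.2
  have hsu : s < u := lt_of_le_of_ne humem.1.1 (fun h => by rw [← h, hXs] at hXu; linarith)
  have hub : u ≤ b := humem.1.2
  have hXlt : ∀ t, s ≤ t → t < u → X t < ε := by
    intro t hst htu
    have htb : t ≤ b := le_trans htu.le hub
    have hne : X t ≠ ε := fun h => absurd (csInf_le hUbdd ⟨⟨hst, htb⟩, h⟩) (not_le.2 htu)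
    rcases hne.lt_or_gt with h | h
    · exact h
    · exfalso
      obtain ⟨r, hr, hXr⟩ := intermediate_value_Icc hst (hXc.mono (Icc_subset_Icc hsab.1 htb))
        ⟨by rw [hXs]; exact hε0.le, h.le⟩
      have := csInf_le hUbdd (show r ∈ Uset from ⟨⟨hr.1, le_trans hr.2 htb⟩, hXr⟩)
      linarith [hr.2]
  have hIoosub : Ioo s u ⊆ Icc a b := fun t ht =>
    ⟨le_trans hsab.1 ht.1.le, le_trans ht.2.le hub⟩
  have hIoo : ∀ t ∈ Ioo s u, 0 < X t ∧ X t < ε ∧ Y t ≠ Real.sin (1 / X t) := by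
    rintro t ⟨h1, h2⟩
    have hpos := hXpos t h1 (le_trans h2.le hub)
    have hlt := hXlt t h1.le h2
    refine ⟨hpos, hlt, fun heq => ?_⟩
    have hmem : γ t ∈ Θ := by rw [hΘ]; exact ⟨hpos, heq⟩
    have := hεΘ t (hIoosub ⟨h1, h2⟩) hmem
    linarith
  set g : ℝ → ℝ := fun t => Y t - Real.sin (1 / X t) with hg
  have hgc : ContinuousOn g (Ioo s u) := by
    apply ContinuousOn.sub (hYc.mono hIoosub)
    exact Real.continuous_sin.comp_continuousOn
      (continuousOn_const.div (hXc.mono hIoosub) (fun t ht => ne_of_gt (hIoo t ht).1))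
  have hgne : ∀ t ∈ Ioo s u, g t ≠ 0 := fun t ht => sub_ne_zero.2 (hIoo t ht).2.2
  have hsign : ∀ t1 ∈ Ioo s u, ∀ t2 ∈ Ioo s u, 0 < g t1 → 0 < g t2 := by
    intro t1 ht1 t2 ht2 hg1
    by_contra h
    have hg2 : g t2 < 0 := lt_of_le_of_ne (not_lt.1 h) (hgne t2 ht2)
    rcases le_total t1 t2 with hle | hle
    · have hsub2 : Icc t1 t2 ⊆ Ioo s u := fun r hr =>
        ⟨lt_of_lt_of_le ht1.1 hr.1, lt_of_le_of_lt hr.2 ht2.2⟩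
      obtain ⟨r, hr, hgr⟩ := intermediate_value_Icc' hle (hgc.mono hsub2)
        ⟨hg2.le, hg1.le⟩
      exact hgne r (hsub2 hr) hgr
    · have hsub2 : Icc t2 t1 ⊆ Ioo s u := fun r hr =>
        ⟨lt_of_lt_of_le ht2.1 hr.1, lt_of_le_of_lt hr.2 ht1.2⟩
      obtain ⟨r, hr, hgr⟩ := intermediate_value_Icc hle (hgc.mono hsub2)
        ⟨hg2.le, hg1.le⟩
      exact hgne r (hsub2 hr) hgr
  -- a point with |Y| ≥ 1
  obtain ⟨tstar, htstar, hYstar⟩ : ∃ t, t ∈ Icc a b ∧ 1 ≤ |Y t| := by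
    set t1 := (s + u)/2 with ht1def
    have ht1 : t1 ∈ Ioo s u := ⟨by rw [ht1def]; linarith, by rw [ht1def]; linarith⟩
    have hXt1 := (hIoo t1 ht1).1
    have hIVT : ∀ v, 0 < v → v < X t1 → ∃ r ∈ Ioo s u, X r = v := by
      intro v hv0 hvlt
      obtain ⟨r, hr, hXr⟩ := intermediate_value_Icc ht1.1.le
        (hXc.mono (Icc_subset_Icc hsab.1 (le_trans ht1.2.le hub)))
        ⟨by rw [hXs]; exact hv0.le, hvlt.le⟩
      refine ⟨r, ⟨?_, lt_of_le_of_lt hr.2 ht1.2⟩, hXr⟩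
      rcases eq_or_lt_of_le hr.1 with h | h
      · exfalso; rw [← h, hXs] at hXr; linarith
      · exact h
    rcases (hgne t1 ht1).lt_or_gt with hneg | hpos
    · obtain ⟨v, hv0, hvw, hvsin⟩ := sin_hit (X t1) hXt1 (-1) (Or.inr rfl)
      obtain ⟨r, hr, hXr⟩ := hIVT v hv0 hvw
      have hgr : g r < 0 := by
        rcases (hgne r hr).lt_or_gt with h | h
        · exact h
        · exact absurd (hsign r hr t1 ht1 h) (not_lt.2 hneg.le)
      refine ⟨r, hIoosub hr, ?_⟩
      have : Y r < -1 := by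
        have : g r = Y r - Real.sin (1 / X r) := rfl
        rw [hXr, one_div, ← one_div, hvsin] at this
        linarith [hgr, this]
      rw [abs_of_neg (by linarith)]
      linarith
    · obtain ⟨v, hv0, hvw, hvsin⟩ := sin_hit (X t1) hXt1 1 (Or.inl rfl)
      obtain ⟨r, hr, hXr⟩ := hIVT v hv0 hvw
      have hgr : 0 < g r := hsign t1 ht1 r hr hpos
      refine ⟨r, hIoosub hr, ?_⟩
      have : 1 < Y r := by
        have h2 : g r = Y r - Real.sin (1 / X r) := rfl
        rw [hXr, hvsin] at h2
        linarith [hgr]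
      rw [abs_of_pos (by linarith)]
      linarith
  -- conclude via variation of the second coordinate
  have hYvar : ENNReal.ofReal 2 ≤ eVariationOn Y (Icc a b) := by
    have hmem1 : a ∈ Icc a b ∩ Icc a tstar := ⟨⟨le_rfl, hab⟩, le_rfl, htstar.1⟩
    have hmem2 : tstar ∈ Icc a b ∩ Icc a tstar := ⟨htstar, htstar.1, le_rfl⟩
    have hmem3 : tstar ∈ Icc a b ∩ Icc tstar b := ⟨htstar, le_rfl, htstar.2⟩
    have hmem4 : b ∈ Icc a b ∩ Icc tstar b := ⟨⟨hab, le_rfl⟩, htstar.2, le_rfl⟩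
    have h1 := eVariationOn.edist_le Y hmem1 hmem2
    have h2 := eVariationOn.edist_le Y hmem3 hmem4
    have h3 := eVariationOn.Icc_add_Icc Y htstar.1 htstar.2 htstar (s := Icc a b)
    rw [Set.inter_self] at h3
    have he1 : ENNReal.ofReal 1 ≤ edist (Y a) (Y tstar) := by
      rw [edist_dist, Real.dist_eq, hYa]
      exact ENNReal.ofReal_le_ofReal (by rwa [zero_sub, abs_neg])
    have he2 : ENNReal.ofReal 1 ≤ edist (Y tstar) (Y b) := by
      rw [edist_dist, Real.dist_eq, hYb]
      exact ENNReal.ofReal_le_ofReal (by rwa [sub_zero])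
    calc ENNReal.ofReal 2 = ENNReal.ofReal 1 + ENNReal.ofReal 1 := by
          rw [← ENNReal.ofReal_add one_pos.le one_pos.le]; norm_num
      _ ≤ edist (Y a) (Y tstar) + edist (Y tstar) (Y b) := add_le_add he1 he2
      _ ≤ eVariationOn Y (Icc a b ∩ Icc a tstar) + eVariationOn Y (Icc a b ∩ Icc tstar b) :=
          add_le_add h1 h2
      _ = eVariationOn Y (Icc a b) := h3
  refine le_trans hYvar ?_
  have hcomp := ((proj_lipschitz 1).lipschitzOnWith (s := Set.univ)).comp_eVariationOn_le
    (Set.mapsTo_univ γ (Icc a b))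
  rw [pathLength]
  have h4 : eVariationOn Y (Icc a b) ≤ ((1 : NNReal) : ℝ≥0∞) * eVariationOn γ (Icc a b) := hcomp
  rwa [ENNReal.coe_one, one_mul] at h4


lemma norm_pq (p q : E2) (h0 : p 0 = 0) (h1 : p 1 = 0)
    (h2 : q 0 = 1) (h3 : q 1 = 0) : ‖p - q‖ = 1 := by
  rw [EuclideanSpace.norm_eq, Fin.sum_univ_two, PiLp.sub_apply, PiLp.sub_apply,
    h0, h1, h2, h3]
  norm_num

end Aux

/-- The topologist's sine curve `Θ = {(t, sin(1/t)) : t > 0}` is permeable in `ℝ²` but not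
finitely permeable: every path from `(0,0)` to `(1,0)` meeting `Θ` in finitely many points has
length at least `2`, although `‖x - y‖ = 1`. -/
theorem stmt18
    (Θ : Set (EuclideanSpace ℝ (Fin 2)))
    (hΘ : Θ = {p | 0 < p 0 ∧ p 1 = Real.sin (1 / p 0)})
    (x y : EuclideanSpace ℝ (Fin 2)) (hx : x = !₂[0, 0]) (hy : y = !₂[1, 0]) :
    Permeable Θ ∧
    ¬ FinitelyPermeable Θ ∧
    ‖x - y‖ = 1 ∧
    ∀ (γ : ℝ → EuclideanSpace ℝ (Fin 2)) (a b : ℝ),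
      IsPathIn Set.univ γ a b x y → (γ '' Set.Icc a b ∩ Θ).Finite →
        ENNReal.ofReal 2 ≤ pathLength γ a b := by
  have h0 : x 0 = 0 := by rw [hx]; simp
  have h1 : x 1 = 0 := by rw [hx]; simp
  have h2 : y 0 = 1 := by rw [hy]; simp
  have h3 : y 1 = 0 := by rw [hy]; simp
  have hnorm : ‖x - y‖ = 1 := norm_pq x y h0 h1 h2 h3
  have hdist : dist x y = 1 := by rw [dist_eq_norm]; exact hnorm
  refine ⟨?_, ?_, hnorm, fun γ a b hp hf =>
    key_lower Θ hΘ γ a b (by rwa [hx, hy] at hp) hf⟩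
  · -- Permeable
    intro p _ q _
    apply le_antisymm
    · rw [intrinsic_eq]
      refine le_trans (sInf_le ?_) (seg_length_le p q)
      exact ⟨_, 0, 1, seg_isPath p q, lt_of_le_of_lt (seg_length_le p q) ENNReal.ofReal_lt_top,
        by rw [Set.inter_univ]; exact seg_closure_countable Θ hΘ p q, rfl⟩
    · apply sInf_le_sInf
      rintro L ⟨γ, a, b, hh1, hh2, _, hh4⟩
      exact ⟨γ, a, b, hh1, hh2, hh4⟩
  · -- not finitely permeable
    intro h
    have heq := h x (Set.mem_univ _) y (Set.mem_univ _)
    rw [intrinsic_eq, hdist] at heq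
    have hge : ENNReal.ofReal 2 ≤ thetaFinDistIn Set.univ Θ x y := by
      apply le_sInf
      rintro L ⟨γ, a, b, hh1, hh2, hh3, rfl⟩
      exact key_lower Θ hΘ γ a b (by rwa [hx, hy] at hh1) hh3
    rw [heq] at hge
    rw [ENNReal.ofReal_le_ofReal_iff (by norm_num)] at hge
    norm_num at hge
end

section
/- There exists a set D₀ ⊆ ℝ consisting only of isolated points (hence a 0-dimensional C^∞-submanifold of ℝ) whose closure contains the classical Cantor set, and such that D₀ is not permeable in ℝ. Moreover, for d ≥ 2, the set D₀ × ℝ^{d−1} is a (d−1)-dimensional C^∞-submanifold of ℝ^d that is not permeable. -/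
open Set MeasureTheory ENNReal

/-- The set `C₀` of finite triadic sums with digits in `{0, 2}`; the classical Cantor set is
its closure. -/
def cantorC0 : Set ℝ :=
  {x | ∃ (n : ℕ) (dg : ℕ → ℕ), (∀ k, dg k = 0 ∨ dg k = 2) ∧
    x = ∑ k ∈ Finset.range n, (dg k : ℝ) * (3 : ℝ)⁻¹ ^ (k + 1)}

namespace Stmt19Aux

noncomputable section

/-- partial Cantor sum -/
def cS (n : ℕ) (d : ℕ → ℕ) : ℝ := ∑ k ∈ Finset.range n, (d k : ℝ) * (3 : ℝ)⁻¹ ^ (k + 1)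

/-- the set of midpoints of removed middle-third intervals -/
def myD : Set ℝ := {x | ∃ n d, (∀ k, d k = 0 ∨ d k = 2) ∧ x = cS n d + (3 : ℝ)⁻¹ ^ n / 2}

lemma cS_nonneg (n : ℕ) (d : ℕ → ℕ) : 0 ≤ cS n d :=
  Finset.sum_nonneg fun k _ => by positivity

lemma cS_le (d : ℕ → ℕ) (hd : ∀ k, d k = 0 ∨ d k = 2) :
    ∀ n, cS n d ≤ 1 - (3:ℝ)⁻¹ ^ n
  | 0 => by simp [cS]
  | (n+1) => by
    have h1 := cS_le d hd n
    have h2 : (d n : ℝ) ≤ 2 := by rcases hd n with h | h <;> rw [h] <;> norm_num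
    have h3 : (0:ℝ) < (3:ℝ)⁻¹ ^ n := by positivity
    have h4 : (3:ℝ)⁻¹ ^ (n+1) = (3:ℝ)⁻¹ ^ n * 3⁻¹ := pow_succ _ _
    rw [cS, Finset.sum_range_succ, ← cS]
    nlinarith [h3, pow_pos (show (0:ℝ) < 3⁻¹ by norm_num) (n+1)]

lemma cS_shift (n : ℕ) (d : ℕ → ℕ) :
    cS (n+1) d = (d 0 : ℝ) * 3⁻¹ + cS n (fun k => d (k+1)) * 3⁻¹ := by
  unfold cS
  rw [Finset.sum_range_succ', Finset.sum_mul, add_comm]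
  congr 1
  · norm_num
  · exact Finset.sum_congr rfl fun k _ => by ring

lemma cS_ge_first (m : ℕ) (hm : 1 ≤ m) (d : ℕ → ℕ) :
    (d 0 : ℝ) * 3⁻¹ ≤ cS m d := by
  have := Finset.single_le_sum (f := fun k => (d k : ℝ) * (3:ℝ)⁻¹ ^ (k+1))
    (fun k _ => by positivity) (Finset.mem_range.mpr hm)
  simpa [cS] using this

lemma sep : ∀ n m : ℕ, n ≤ m → ∀ d d' : ℕ → ℕ, (∀ k, d k = 0 ∨ d k = 2) →
    (∀ k, d' k = 0 ∨ d' k = 2) →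
    cS n d + (3:ℝ)⁻¹ ^ n / 2 ≠ cS m d' + (3:ℝ)⁻¹ ^ m / 2 →
    (3:ℝ)⁻¹ ^ (n+1) / 2 ≤ |(cS n d + (3:ℝ)⁻¹ ^ n / 2) - (cS m d' + (3:ℝ)⁻¹ ^ m / 2)| := by
  intro n
  induction n with
  | zero =>
    intro m hm d d' hd hd' hne
    match m with
    | 0 => simp [cS] at hne
    | (m+1) =>
      have hys := cS_shift m d'
      have hx0 : cS 0 d = 0 := by simp [cS]
      have hpm : (0:ℝ) < (3:ℝ)⁻¹ ^ m := by positivity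
      have hpsucc : (3:ℝ)⁻¹ ^ (m+1) = (3:ℝ)⁻¹ ^ m * 3⁻¹ := pow_succ _ _
      have hb := cS_le (fun k => d' (k+1)) (fun k => hd' (k+1)) m
      have hbn := cS_nonneg m (fun k => d' (k+1))
      rcases hd' 0 with h0 | h0
      · have h0' : ((d' 0 : ℕ) : ℝ) = 0 := by rw [h0]; norm_num
        rw [le_abs]; left
        rw [hx0, hys, h0']
        norm_num
        nlinarith
      · have h0' : ((d' 0 : ℕ) : ℝ) = 2 := by rw [h0]; norm_num
        rw [le_abs]; right
        rw [hx0, hys, h0']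
        norm_num
        nlinarith
  | succ n ih =>
    intro m hm d d' hd hd' hne
    match m, hm with
    | (m+1), hm =>
      have hm' : n ≤ m := Nat.succ_le_succ_iff.mp hm
      have hxs := cS_shift n d
      have hys := cS_shift m d'
      have hpn : (0:ℝ) < (3:ℝ)⁻¹ ^ n := by positivity
      have hpm : (0:ℝ) < (3:ℝ)⁻¹ ^ m := by positivity
      have hpsn : (3:ℝ)⁻¹ ^ (n+1) = (3:ℝ)⁻¹ ^ n * 3⁻¹ := pow_succ _ _
      have hpsm : (3:ℝ)⁻¹ ^ (m+1) = (3:ℝ)⁻¹ ^ m * 3⁻¹ := pow_succ _ _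
      have hbn := cS_le (fun k => d (k+1)) (fun k => hd (k+1)) n
      have hbm := cS_le (fun k => d' (k+1)) (fun k => hd' (k+1)) m
      have hbn0 := cS_nonneg n (fun k => d (k+1))
      have hbm0 := cS_nonneg m (fun k => d' (k+1))
      by_cases hdd : d 0 = d' 0
      · set x' := cS n (fun k => d (k+1)) + (3:ℝ)⁻¹ ^ n / 2 with hx'
        set y' := cS m (fun k => d' (k+1)) + (3:ℝ)⁻¹ ^ m / 2 with hy'
        have hrel : (cS (n+1) d + (3:ℝ)⁻¹ ^ (n+1) / 2) - (cS (m+1) d' + (3:ℝ)⁻¹ ^ (m+1) / 2)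
            = (x' - y') * 3⁻¹ := by
          rw [hxs, hys, hdd, hx', hy']
          ring
        have hne' : x' ≠ y' := by
          intro h
          apply hne
          have := hrel
          rw [h, sub_self, zero_mul] at this
          linarith [sub_eq_zero.mp this]
        have hih := ih m hm' _ _ (fun k => hd (k+1)) (fun k => hd' (k+1)) hne'
        rw [hrel, abs_mul]
        have habs : |(3:ℝ)⁻¹| = 3⁻¹ := by norm_num
        rw [habs]
        calc (3:ℝ)⁻¹ ^ (n+1+1) / 2 = ((3:ℝ)⁻¹ ^ (n+1) / 2) * 3⁻¹ := by ring
        _ ≤ |x' - y'| * 3⁻¹ := by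
            apply mul_le_mul_of_nonneg_right hih (by norm_num)
      · have hsmall : (3:ℝ)⁻¹ ^ (n+1+1) / 2 ≤ 1/3 := by
          have h : (3:ℝ)⁻¹ ^ (n+1+1) ≤ (3:ℝ)⁻¹ ^ 1 :=
            pow_le_pow_of_le_one (by norm_num) (by norm_num) (by omega)
          rw [pow_one] at h
          norm_num at h ⊢
          linarith
        rcases hd 0 with h0 | h0 <;> rcases hd' 0 with h1 | h1
        · exact absurd (h0.trans h1.symm) hdd
        · -- d 0 = 0, d' 0 = 2 : x ≤ 1/3 ≤ 2/3 ≤ y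
          have h0' : ((d 0 : ℕ) : ℝ) = 0 := by rw [h0]; norm_num
          have hy2 : ((2:ℕ) : ℝ) * 3⁻¹ ≤ cS (m+1) d' := by
            have := cS_ge_first (m+1) (by omega) d'
            rwa [h1] at this
          rw [le_abs]; right
          rw [hxs, h0']
          push_cast at hy2 ⊢
          nlinarith
        · -- d 0 = 2, d' 0 = 0
          have h1' : ((d' 0 : ℕ) : ℝ) = 0 := by rw [h1]; norm_num
          have hx2 : ((2:ℕ) : ℝ) * 3⁻¹ ≤ cS (n+1) d := by
            have := cS_ge_first (n+1) (by omega) d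
            rwa [h0] at this
          rw [le_abs]; left
          rw [hys, h1']
          push_cast at hx2 ⊢
          nlinarith
        · exact absurd (h0.trans h1.symm) hdd

end

end Stmt19Aux
namespace Stmt19Aux

lemma myD_sub : myD ⊆ Set.Icc 0 1 := by
  rintro x ⟨n, d, hd, rfl⟩
  have h1 := cS_nonneg n d
  have h2 := cS_le d hd n
  have h3 : (0:ℝ) < (3:ℝ)⁻¹ ^ n := by positivity
  constructor <;> [positivity; linarith]

lemma myD_isolated : ∀ x ∈ myD, ∃ ε > (0 : ℝ), myD ∩ Metric.ball x ε = {x} := by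
  rintro x ⟨n, d, hd, rfl⟩
  refine ⟨(3:ℝ)⁻¹ ^ (n+1) / 2, by positivity, ?_⟩
  ext y
  simp only [Set.mem_inter_iff, Metric.mem_ball, Set.mem_singleton_iff]
  constructor
  · rintro ⟨⟨m, d', hd', rfl⟩, hdist⟩
    by_contra hne
    rw [Real.dist_eq] at hdist
    rcases le_total n m with h | h
    · have hs := sep n m h d d' hd hd' (fun he => hne he.symm)
      rw [abs_sub_comm] at hs
      linarith
    · have hs := sep m n h d' d hd' hd hne
      have hpow : (3:ℝ)⁻¹ ^ (n+1) ≤ (3:ℝ)⁻¹ ^ (m+1) :=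
        pow_le_pow_of_le_one (by norm_num) (by norm_num) (by omega)
      linarith
  · rintro rfl
    exact ⟨⟨n, d, hd, rfl⟩, by rw [dist_self]; positivity⟩

lemma cantor_sub : cantorC0 ⊆ closure myD := by
  rintro c ⟨n, dg, hdg, rfl⟩
  rw [Metric.mem_closure_iff]
  intro ε hε
  obtain ⟨M, hM⟩ := exists_pow_lt_of_lt_one hε (by norm_num : (3:ℝ)⁻¹ < 1)
  set N := max n M with hN
  set e : ℕ → ℕ := fun k => if k < n then dg k else 0 with he
  have hsum : cS N e = ∑ k ∈ Finset.range n, (dg k : ℝ) * (3 : ℝ)⁻¹ ^ (k + 1) := by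
    unfold cS
    rw [← Finset.sum_subset (Finset.range_subset_range.mpr (le_max_left n M))]
    · exact Finset.sum_congr rfl fun k hk => by
        rw [he]; simp only; rw [if_pos (Finset.mem_range.mp hk)]
    · intro k _ hnk
      rw [he]; simp only
      rw [if_neg (fun h => hnk (Finset.mem_range.mpr h))]
      norm_num
  refine ⟨cS N e + (3:ℝ)⁻¹ ^ N / 2, ⟨N, e, fun k => ?_, rfl⟩, ?_⟩
  · rw [he]; simp only
    split
    · exact hdg k
    · left; rfl
  · have hd2 : ∑ k ∈ Finset.range n, (dg k : ℝ) * (3 : ℝ)⁻¹ ^ (k + 1)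
        - (cS N e + (3:ℝ)⁻¹ ^ N / 2) = -((3:ℝ)⁻¹ ^ N / 2) := by
      rw [← hsum]; ring
    rw [Real.dist_eq, hd2, abs_neg, abs_of_nonneg (by positivity)]
    have hpow : (3:ℝ)⁻¹ ^ N ≤ (3:ℝ)⁻¹ ^ M :=
      pow_le_pow_of_le_one (by norm_num) (by norm_num) (le_max_right n M)
    have : (0:ℝ) < (3:ℝ)⁻¹ ^ N := by positivity
    linarith

lemma closure_cantor_sub : closure cantorC0 ⊆ closure myD :=
  closure_minimal cantor_sub isClosed_closure

end Stmt19Aux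
namespace Stmt19Aux

noncomputable section

def trm (b : ℕ → Bool) (k : ℕ) : ℝ := (if b k then 2 else 0) * (3:ℝ)⁻¹ ^ (k + 1)

lemma trm_nonneg (b : ℕ → Bool) (k : ℕ) : 0 ≤ trm b k := by
  unfold trm; split <;> positivity

lemma trm_le (b : ℕ → Bool) (k : ℕ) : trm b k ≤ 2 * (3:ℝ)⁻¹ ^ (k + 1) := by
  unfold trm; split
  · exact le_rfl
  · rw [zero_mul]; positivity

lemma summable_pow3 : Summable (fun k : ℕ => (3:ℝ)⁻¹ ^ (k + 1)) := by
  simpa [pow_succ] using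
    (summable_geometric_of_lt_one (by norm_num) (by norm_num : (3:ℝ)⁻¹ < 1)).mul_right 3⁻¹

lemma summable_trm (b : ℕ → Bool) : Summable (trm b) :=
  Summable.of_nonneg_of_le (trm_nonneg b) (trm_le b) (summable_pow3.mul_left 2)

def fB (b : ℕ → Bool) : ℝ := ∑' k, trm b k

lemma fB_mem_closure (b : ℕ → Bool) : fB b ∈ closure cantorC0 := by
  have hs := (summable_trm b).hasSum.tendsto_sum_nat
  refine mem_closure_of_tendsto hs (Filter.Eventually.of_forall fun n => ?_)
  refine ⟨n, fun k => if b k then 2 else 0, fun k => by by_cases h : b k <;> simp [h], ?_⟩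
  refine Finset.sum_congr rfl fun k _ => ?_
  by_cases h : b k <;> simp [trm, h]

set_option maxHeartbeats 1000000 in
lemma fB_lt {b b' : ℕ → Bool} {j : ℕ} (hpre : ∀ k < j, b k = b' k)
    (hbj : b j = true) (hbj' : b' j = false) : fB b' < fB b := by
  have hsb := summable_trm b
  have hsb' := summable_trm b'
  have hsub : Summable (fun k => trm b k - trm b' k) := hsb.sub hsb'
  have key : fB b - fB b' = ∑' k, (trm b k - trm b' k) := (Summable.tsum_sub hsb hsb').symm
  have hsplit := (Summable.sum_add_tsum_nat_add (f := fun k => trm b k - trm b' k) (j+1) hsub)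
  have hhead : ∑ k ∈ Finset.range (j+1), (trm b k - trm b' k) = 2 * (3:ℝ)⁻¹ ^ (j+1) := by
    rw [Finset.sum_range_succ]
    have hz : ∑ k ∈ Finset.range j, (trm b k - trm b' k) = 0 :=
      Finset.sum_eq_zero fun k hk => by
        unfold trm; rw [hpre k (Finset.mem_range.mp hk)]; ring
    rw [hz, zero_add]
    unfold trm; rw [hbj, hbj']
    norm_num
  have hgeo : Summable (fun k : ℕ => 2 * (3:ℝ)⁻¹ ^ (j+2) * (3:ℝ)⁻¹ ^ k) :=
    (summable_geometric_of_lt_one (by norm_num) (by norm_num : (3:ℝ)⁻¹ < 1)).mul_left _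
  have heq : ∀ k : ℕ, 2 * (3:ℝ)⁻¹ ^ (j+2) * (3:ℝ)⁻¹ ^ k = 2 * (3:ℝ)⁻¹ ^ (k+j+2) := by
    intro k
    rw [show k + j + 2 = k + (j+2) by omega, pow_add]
    ring
  have hgeo2 : Summable (fun k : ℕ => 2 * (3:ℝ)⁻¹ ^ (k+j+2)) := hgeo.congr heq
  have htail : -(3:ℝ)⁻¹ ^ (j+1) ≤ ∑' k, (trm b (k + (j+1)) - trm b' (k + (j+1))) := by
    have hb1 : ∀ k : ℕ, -(2 * (3:ℝ)⁻¹ ^ (k+j+2)) ≤ trm b (k + (j+1)) - trm b' (k + (j+1)) := by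
      intro k
      have h1 := trm_nonneg b (k + (j+1))
      have h2 := trm_le b' (k + (j+1))
      have h3 : k + (j+1) + 1 = k + j + 2 := by omega
      rw [h3] at h2
      linarith
    have hval : ∑' k : ℕ, -(2 * (3:ℝ)⁻¹ ^ (k+j+2)) = -(3:ℝ)⁻¹ ^ (j+1) := by
      rw [tsum_neg, neg_inj]
      calc ∑' k : ℕ, 2 * (3:ℝ)⁻¹ ^ (k+j+2)
          = ∑' k : ℕ, 2 * (3:ℝ)⁻¹ ^ (j+2) * (3:ℝ)⁻¹ ^ k := (tsum_congr heq).symm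
        _ = 2 * (3:ℝ)⁻¹ ^ (j+2) * ∑' k : ℕ, (3:ℝ)⁻¹ ^ k := tsum_mul_left
        _ = (3:ℝ)⁻¹ ^ (j+1) := by
            rw [tsum_geometric_of_lt_one (by norm_num) (by norm_num : (3:ℝ)⁻¹ < 1)]
            have h13 : (1 - (3:ℝ)⁻¹)⁻¹ = 3/2 := by norm_num
            have h2 : (3:ℝ)⁻¹ ^ (j+2) = (3:ℝ)⁻¹ ^ (j+1) * 3⁻¹ := by ring
            rw [h13, h2]
            ring
    calc -(3:ℝ)⁻¹ ^ (j+1) = ∑' k : ℕ, -(2 * (3:ℝ)⁻¹ ^ (k+j+2)) := hval.symm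
      _ ≤ ∑' k, (trm b (k + (j+1)) - trm b' (k + (j+1))) :=
          Summable.tsum_le_tsum hb1 hgeo2.neg ((summable_nat_add_iff (j+1)).mpr hsub)
  have hfin : 2 * (3:ℝ)⁻¹ ^ (j+1) + -(3:ℝ)⁻¹ ^ (j+1) ≤ fB b - fB b' := by
    rw [key, ← hsplit, hhead]
    linarith [htail]
  have hp : (0:ℝ) < (3:ℝ)⁻¹ ^ (j+1) := by positivity
  linarith

lemma fB_inj : Function.Injective fB := by
  intro b b' h
  by_contra hne
  have hex : ∃ k, b k ≠ b' k := by
    by_contra hall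
    push_neg at hall
    exact hne (funext hall)
  have hj := Nat.find_spec hex
  have hpre : ∀ k < Nat.find hex, b k = b' k := fun k hk =>
    not_not.mp (Nat.find_min hex hk)
  cases hb : b (Nat.find hex) <;> cases hb' : b' (Nat.find hex)
  · exact hj (hb.trans hb'.symm)
  · exact absurd h (ne_of_lt (fB_lt (fun k hk => (hpre k hk).symm) hb' hb))
  · exact absurd h.symm (ne_of_lt (fB_lt hpre hb hb'))
  · exact hj (hb.trans hb'.symm)

lemma not_countable_nat_bool : ¬ Countable (ℕ → Bool) := by
  intro h
  obtain ⟨g, hg⟩ := exists_surjective_nat (ℕ → Bool)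
  apply Function.cantor_surjective (fun n => {m | g n m = true})
  intro S
  classical
  obtain ⟨n, hn⟩ := hg (fun m => decide (m ∈ S))
  refine ⟨n, ?_⟩
  ext m
  simp [hn]

lemma not_countable_closure_cantor : ¬ (closure cantorC0).Countable := by
  intro h
  have h1 : (Set.range fB).Countable :=
    h.mono (Set.range_subset_iff.mpr fB_mem_closure)
  haveI := h1.to_subtype
  have : Countable (ℕ → Bool) := Countable.of_equiv _ (Equiv.ofInjective fB fB_inj).symm
  exact not_countable_nat_bool this

end

end Stmt19Aux
namespace Stmt19Aux

lemma uncount {X : Type*} [MetricSpace X] {π : X → ℝ} (hπ : Continuous π) (γ : ℝ → X)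
    (a b : ℝ) (hab : a ≤ b) (hγ : ContinuousOn γ (Set.Icc a b))
    (ha : π (γ a) = 0) (hb : π (γ b) = 1) :
    ¬ (closure (γ '' Set.Icc a b ∩ {p | π p ∈ myD})).Countable := by
  intro hcnt
  set S := γ '' Set.Icc a b ∩ {p | π p ∈ myD} with hS
  have hK : IsCompact (γ '' Set.Icc a b) := isCompact_Icc.image_of_continuousOn hγ
  have hclK : closure S ⊆ γ '' Set.Icc a b :=
    closure_minimal Set.inter_subset_left hK.isClosed
  have hcS : IsCompact (closure S) := hK.of_isClosed_subset isClosed_closure hclK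
  have himg : IsClosed (π '' closure S) := (hcS.image hπ).isClosed
  have hDsub : myD ⊆ π '' closure S := by
    intro z hz
    have hz01 : z ∈ Set.Icc (0:ℝ) 1 := myD_sub hz
    have hmem : z ∈ (π ∘ γ) '' Set.Icc a b := by
      apply intermediate_value_Icc hab (hπ.comp_continuousOn hγ)
      show z ∈ Set.Icc (π (γ a)) (π (γ b))
      rw [ha, hb]
      exact hz01
    obtain ⟨t, ht, hgt⟩ := hmem
    exact ⟨γ t, subset_closure ⟨Set.mem_image_of_mem γ ht, by
      simp only [Set.mem_setOf_eq]; rw [show π (γ t) = z from hgt]; exact hz⟩, hgt⟩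
  have hclD : closure cantorC0 ⊆ π '' closure S :=
    closure_cantor_sub.trans (closure_minimal hDsub himg)
  exact not_countable_closure_cantor ((hcnt.image π).mono hclD)

lemma key_lemma {X : Type*} [MetricSpace X] (π : X → ℝ) (hπ : Continuous π)
    (x y : X) (hx : π x = 0) (hy : π y = 1)
    (hfin : ∃ γ a b, IsPathIn (Set.univ : Set X) γ a b x y ∧ pathLength γ a b < ⊤)
    (hP : Permeable {p : X | π p ∈ myD}) : False := by
  have h1 : intrinsicDist (Set.univ : Set X) x y < ⊤ := by
    obtain ⟨γ, a, b, hp, hf⟩ := hfin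
    exact lt_of_le_of_lt (sInf_le ⟨γ, a, b, hp, hf, rfl⟩) hf
  have h2 : thetaDistIn (Set.univ : Set X) {p | π p ∈ myD} x y = ⊤ := by
    apply sInf_eq_top.mpr
    rintro L ⟨γ, a, b, ⟨hab, hcont, hga, hgb, -⟩, hlen, hcount, rfl⟩
    rw [Set.inter_univ] at hcount
    exact absurd hcount
      (uncount hπ γ a b hab hcont (by rw [hga, hx]) (by rw [hgb, hy]))
  have h3 := hP x (Set.mem_univ x) y (Set.mem_univ y)
  rw [h2] at h3
  exact absurd h3.symm h1.ne

lemma pathLength_id_lt_top : pathLength (id : ℝ → ℝ) 0 1 < ⊤ := by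
  have h := MonotoneOn.eVariationOn_le (f := (id : ℝ → ℝ)) (s := Set.Icc (0:ℝ) 1)
    (monotone_id.monotoneOn _) (Set.left_mem_Icc.mpr zero_le_one)
    (Set.right_mem_Icc.mpr zero_le_one)
  rw [Set.inter_self] at h
  exact lt_of_le_of_lt h ENNReal.ofReal_lt_top

lemma not_perm_1d : ¬ Permeable myD := by
  intro hP
  have hP' : Permeable {p : ℝ | (fun q : ℝ => q) p ∈ myD} := by
    simpa [Set.setOf_mem_eq] using hP
  exact key_lemma (fun q : ℝ => q) continuous_id 0 1 rfl rfl
    ⟨id, 0, 1, ⟨zero_le_one, continuousOn_id, rfl, rfl, fun _ _ => Set.mem_univ _⟩,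
      pathLength_id_lt_top⟩ hP'

lemma not_perm_dd (d : ℕ) (hd : 2 ≤ d) :
    ¬ Permeable {p : EuclideanSpace ℝ (Fin d) | p ⟨0, Nat.lt_of_lt_of_le Nat.two_pos hd⟩ ∈ myD} := by
  intro hP
  set i0 : Fin d := ⟨0, Nat.lt_of_lt_of_le Nat.two_pos hd⟩ with hi0
  set Y : EuclideanSpace ℝ (Fin d) := EuclideanSpace.single i0 1 with hYdef
  have hY : Y i0 = 1 := by
    rw [hYdef, EuclideanSpace.single_apply, if_pos rfl]
  have hnormY : ‖Y‖ = 1 := by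
    rw [hYdef, EuclideanSpace.norm_single, norm_one]
  set γ : ℝ → EuclideanSpace ℝ (Fin d) := fun t => t • Y with hγdef
  have hlip : LipschitzWith 1 γ := by
    apply LipschitzWith.of_dist_le_mul
    intro s t
    rw [dist_eq_norm, hγdef]
    simp only
    rw [← sub_smul, norm_smul, hnormY, mul_one, Real.norm_eq_abs, Real.dist_eq]
    norm_num
  have hlen : pathLength γ 0 1 < ⊤ := by
    have h := LipschitzOnWith.comp_eVariationOn_le
      (hlip.lipschitzOnWith (s := Set.univ)) (g := (id : ℝ → ℝ))
      (s := Set.Icc (0:ℝ) 1) (Set.mapsTo_univ _ _)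
    have h2 : eVariationOn (γ ∘ id) (Set.Icc (0:ℝ) 1) = pathLength γ 0 1 := rfl
    rw [h2] at h
    refine lt_of_le_of_lt h ?_
    apply ENNReal.mul_lt_top ENNReal.coe_lt_top
    exact pathLength_id_lt_top
  exact key_lemma (fun p : EuclideanSpace ℝ (Fin d) => p i0)
    ((EuclideanSpace.proj (𝕜 := ℝ) i0).continuous) 0 Y (by simp) hY
    ⟨γ, 0, 1, ⟨zero_le_one, hlip.continuous.continuousOn, by simp [hγdef],
      by simp [hγdef], fun _ _ => Set.mem_univ _⟩, hlen⟩ hP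

end Stmt19Aux


/-- There is a set `D₀ ⊆ ℝ` of isolated points whose closure contains the classical Cantor set
(the closure of `cantorC0`), such that `D₀` is not permeable in `ℝ`; moreover, for every
`d ≥ 2` the cylinder `D₀ × ℝ^{d-1}` is not permeable in `ℝ^d`. -/
theorem stmt19 :
    ∃ D₀ : Set ℝ,
      (∀ x ∈ D₀, ∃ ε > (0 : ℝ), D₀ ∩ Metric.ball x ε = {x}) ∧
      closure cantorC0 ⊆ closure D₀ ∧
      ¬ Permeable D₀ ∧
      ∀ d : ℕ, ∀ _hd : 2 ≤ d,
        ¬ Permeable {p : EuclideanSpace ℝ (Fin d) | p ⟨0, by omega⟩ ∈ D₀} := by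
  exact ⟨Stmt19Aux.myD, Stmt19Aux.myD_isolated, Stmt19Aux.closure_cantor_sub,
    Stmt19Aux.not_perm_1d, fun d hd => Stmt19Aux.not_perm_dd d hd⟩
end
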